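/- arXiv:0712.0556 — 10 statements merged into one kernel-verified Lean document; each statement's English description precedes it below -/
import Mathlib

section
/- Let $I_1,\dots,I_n$ be independent Bernoulli random variables (with possibly different parameters $p_i$) and let $X_n = \sum_{i=1}^n I_i$. Then the sequence $u(i) = \Pr[X_n = i]$ is log-concave: $u(i)^2 \ge u(i-1)u(i+1)$ for all $1 \le i \le n-1$. -/
open Finset

/-- recursive pmf of Poisson binomial -/
def W : (n : ℕ) → (Fin n → ℝ) → ℕ → ℝ
  | 0, _, 0 => 1
  | 0, _, _+1 => 0
  | n+1, p, 0 => (1 - p 0) * W n (Fin.tail p) 0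
  | n+1, p, i+1 => (1 - p 0) * W n (Fin.tail p) (i+1) + p 0 * W n (Fin.tail p) i

lemma W_nonneg : ∀ (n : ℕ) (p : Fin n → ℝ), (∀ i, 0 ≤ p i) → (∀ i, p i ≤ 1) →
    ∀ i, 0 ≤ W n p i
  | 0, _, _, _, 0 => by norm_num [W]
  | 0, _, _, _, (i+1) => by norm_num [W]
  | n+1, p, hp, hp1, 0 => by
      have := W_nonneg n (Fin.tail p) (fun i => hp _) (fun i => hp1 _) 0
      have h0 : (0:ℝ) ≤ 1 - p 0 := by linarith [hp1 0]
      simpa [W] using mul_nonneg h0 this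
  | n+1, p, hp, hp1, (i+1) => by
      have h1 := W_nonneg n (Fin.tail p) (fun i => hp _) (fun i => hp1 _) (i+1)
      have h2 := W_nonneg n (Fin.tail p) (fun i => hp _) (fun i => hp1 _) i
      have h0 : (0:ℝ) ≤ 1 - p 0 := by linarith [hp1 0]
      have := hp 0
      simp only [W]
      positivity

lemma W_strong : ∀ (n : ℕ) (p : Fin n → ℝ), (∀ i, 0 ≤ p i) → (∀ i, p i ≤ 1) →
    ∀ i j, i ≤ j → W n p i * W n p (j+1) ≤ W n p (i+1) * W n p j := by
  intro n
  induction n with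
  | zero =>
    intro p hp hp1 i j hij
    simp [W]
  | succ n ih =>
    intro p hp hp1 i j hij
    set q := Fin.tail p with hq
    have hq0 : ∀ i, 0 ≤ q i := fun i => hp _
    have hq1 : ∀ i, q i ≤ 1 := fun i => hp1 _
    have Q := ih q hq0 hq1
    have N := W_nonneg n q hq0 hq1
    have hp0 : 0 ≤ p 0 := hp 0
    have hp0' : 0 ≤ 1 - p 0 := by linarith [hp1 0]
    set a := W n q with ha
    match i, j, hij with
    | 0, 0, _ =>
      simp only [W, ← hq, ← ha]
      ring_nf
      nlinarith [Q 0 0 le_rfl, N 0, N 1]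
    | 0, j+1, _ =>
      simp only [W, ← hq, ← ha]
      have q1 := Q 0 (j+1) (by omega)
      nlinarith [mul_le_mul_of_nonneg_left q1 (mul_nonneg hp0' hp0'),
        mul_nonneg (mul_nonneg (mul_nonneg hp0' hp0) (N 1)) (N j),
        mul_nonneg (mul_nonneg (mul_nonneg hp0 hp0) (N 0)) (N j)]
    | i+1, j+1, hij =>
      have hij' : i ≤ j := by omega
      simp only [W, ← hq, ← ha]
      have t1 : a (i+1) * a (j+2) ≤ a (i+2) * a (j+1) := Q (i+1) (j+1) (by omega)
      have t2 : a i * a (j+1) ≤ a (i+1) * a j := Q i j hij'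
      have t3 : a i * a (j+2) ≤ a (i+2) * a j := by
        rcases eq_or_lt_of_le hij' with h | h
        · subst h
          have := Q i (i+1) (by omega)
          nlinarith [Q i (i+1) (by omega)]
        · calc a i * a (j+2) ≤ a (i+1) * a (j+1) := Q i (j+1) (by omega)
            _ ≤ a (i+2) * a j := Q (i+1) j (by omega)
      nlinarith [mul_nonneg hp0' hp0, mul_nonneg hp0 hp0, mul_nonneg hp0' hp0',
        mul_le_mul_of_nonneg_left t1 (mul_nonneg hp0' hp0'),
        mul_le_mul_of_nonneg_left t2 (mul_nonneg hp0 hp0),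
        mul_le_mul_of_nonneg_left t3 (mul_nonneg hp0' hp0)]

lemma sum_ite_mul {α : Type*} [Fintype α] (a : ℝ) (c : α → Prop) [DecidablePred c]
    (f : α → ℝ) :
    ∑ x, (if c x then a * f x else 0) = a * ∑ x, (if c x then f x else 0) := by
  rw [Finset.mul_sum]
  exact Finset.sum_congr rfl fun x _ => by split <;> simp

lemma W_eq : ∀ (n : ℕ) (p : Fin n → ℝ) (i : ℕ),
    (∑ b ∈ Finset.univ.filter
        (fun b : Fin n → Bool => (Finset.univ.filter (fun j => b j = true)).card = i),
        ∏ j : Fin n, (if b j then p j else 1 - p j)) = W n p i := by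
  intro n
  induction n with
  | zero =>
    intro p i
    match i with
    | 0 => simp [W]
    | i+1 => simp [W]
  | succ n ih =>
    intro p i
    rw [Finset.sum_filter]
    have key := Fintype.sum_equiv (Fin.consEquiv fun _ : Fin (n+1) => Bool)
      (fun x : Bool × (Fin n → Bool) =>
        if (Finset.univ.filter (fun j => (Fin.cons x.1 x.2 : Fin (n+1) → Bool) j = true)).card = i
        then ∏ j : Fin (n+1), (if (Fin.cons x.1 x.2 : Fin (n+1) → Bool) j = true then p j else 1 - p j) else 0)
      (fun b : Fin (n+1) → Bool =>
        if (Finset.univ.filter (fun j => b j = true)).card = i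
        then ∏ j : Fin (n+1), (if b j = true then p j else 1 - p j) else 0)
      (fun x => by rcases x with ⟨x, c⟩; rfl)
    rw [← key]
    rw [Fintype.sum_prod_type]
    have hcard : ∀ (x : Bool) (c : Fin n → Bool),
        (Finset.univ.filter (fun j => (Fin.cons x c : Fin (n+1) → Bool) j = true)).card
          = (if x then 1 else 0) + (Finset.univ.filter (fun j => c j = true)).card := by
      intro x c
      rw [Finset.card_filter, Finset.card_filter, Fin.sum_univ_succ]
      simp [Fin.cons_succ]
    have hprod : ∀ (x : Bool) (c : Fin n → Bool),
        (∏ j : Fin (n+1), (if (Fin.cons x c : Fin (n+1) → Bool) j = true then p j else 1 - p j))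
          = (if x then p 0 else 1 - p 0) * ∏ j : Fin n, (if c j then p j.succ else 1 - p j.succ) := by
      intro x c
      rw [Fin.prod_univ_succ]
      simp [Fin.cons_succ]
    simp only [hcard, hprod]
    rw [Fintype.sum_bool]
    simp only [reduceIte, Bool.false_eq_true, if_false]
    have ihg : ∀ k, (∑ x : Fin n → Bool,
        if (Finset.univ.filter (fun j => x j = true)).card = k
        then ∏ j : Fin n, (if x j = true then p j.succ else 1 - p j.succ) else 0)
        = W n (Fin.tail p) k := by
      intro k
      rw [← ih (Fin.tail p) k, Finset.sum_filter]
      rfl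
    match i with
    | 0 =>
      have h1 : ∀ c : Fin n → Bool,
          (1 + (Finset.univ.filter (fun j => c j = true)).card = 0) ↔ False := by
        intro c; simp
      have h2 : ∀ c : Fin n → Bool,
          (0 + (Finset.univ.filter (fun j => c j = true)).card = 0) ↔
          ((Finset.univ.filter (fun j => c j = true)).card = 0) := by intro c; omega
      simp only [h1, if_false, Finset.sum_const_zero, h2, zero_add]
      rw [sum_ite_mul, ihg]
      simp [W]
    | i+1 =>
      have h1 : ∀ c : Fin n → Bool,
          (1 + (Finset.univ.filter (fun j => c j = true)).card = i + 1) ↔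
          ((Finset.univ.filter (fun j => c j = true)).card = i) := by intro c; omega
      have h2 : ∀ c : Fin n → Bool,
          (0 + (Finset.univ.filter (fun j => c j = true)).card = i + 1) ↔
          ((Finset.univ.filter (fun j => c j = true)).card = i + 1) := by intro c; omega
      simp only [h1, h2]
      rw [sum_ite_mul, sum_ite_mul, ihg, ihg]
      simp only [W]
      ring

/-- The probability mass function of a sum of independent Bernoulli random
variables with parameters `p i`: `u i = Pr[X_n = i]`, expressed as a sum over
0-1 configurations with exactly `i` ones, is log-concave. -/
theorem bernoulli_sum_pmf_log_concave (n : ℕ) (p : Fin n → ℝ)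
    (hp : ∀ i, 0 ≤ p i) (hp1 : ∀ i, p i ≤ 1) (u : ℕ → ℝ)
    (hu : ∀ i : ℕ, u i =
      ∑ b ∈ Finset.univ.filter
        (fun b : Fin n → Bool => (Finset.univ.filter (fun j => b j = true)).card = i),
        ∏ j : Fin n, (if b j then p j else 1 - p j)) :
    ∀ i : ℕ, 1 ≤ i → i ≤ n - 1 → u (i - 1) * u (i + 1) ≤ u i ^ 2 := by
  intro i hi _
  have hW : ∀ k, u k = W n p k := fun k => (hu k).trans (W_eq n p k)
  have h := W_strong n p hp hp1 (i-1) i (by omega)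
  have e1 : i - 1 + 1 = i := by omega
  rw [e1] at h
  calc u (i-1) * u (i+1) = W n p (i-1) * W n p (i+1) := by rw [hW, hW]
    _ ≤ W n p i * W n p i := h
    _ = u i ^ 2 := by rw [hW]; ring
end

section
/- If $(a_i)_{i\ge 0}$ and $(b_i)_{i\ge 0}$ are nonnegative log-concave sequences, then their convolution $c_k = \sum_{i=0}^k a_i b_{k-i}$ is log-concave. -/
open Finset

private lemma key_ratio (a : ℕ → ℝ) (ha0 : ∀ i, 0 ≤ a i)
    (ha : ∀ i, 1 ≤ i → a (i - 1) * a (i + 1) ≤ a i ^ 2)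
    (ha' : ∀ i j k : ℕ, i ≤ j → j ≤ k → 0 < a i → 0 < a k → 0 < a j) :
    ∀ d i : ℕ, a i * a (i + d + 1) ≤ a (i + 1) * a (i + d) := by
  intro d
  induction d with
  | zero => intro i; simp [mul_comm]
  | succ d ih =>
    intro i
    rcases eq_or_lt_of_le (ha0 i) with h0 | h0
    · calc a i * a (i + (d + 1) + 1) = 0 := by rw [← h0]; ring
        _ ≤ _ := mul_nonneg (ha0 _) (ha0 _)
    rcases eq_or_lt_of_le (ha0 (i + (d + 1) + 1)) with h2 | h2
    · calc a i * a (i + (d + 1) + 1) = 0 := by rw [← h2]; ring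
        _ ≤ _ := mul_nonneg (ha0 _) (ha0 _)
    have hmid1 : 0 < a (i + d + 1) := ha' i (i + d + 1) (i + (d + 1) + 1) (by omega) (by omega) h0 h2
    have hmid0 : 0 < a (i + d) := ha' i (i + d) (i + (d + 1) + 1) (by omega) (by omega) h0 h2
    have hlc := ha (i + d + 1) (by omega)
    rw [show i + d + 1 - 1 = i + d from by omega] at hlc
    have hih := ih i
    have hprod := mul_le_mul hih hlc (mul_nonneg (ha0 _) (ha0 _))
      (mul_nonneg (ha0 _) (ha0 _))
    have hgoal : a i * a (i + (d + 1) + 1) * (a (i + d) * a (i + d + 1))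
        ≤ a (i + 1) * a (i + (d + 1)) * (a (i + d) * a (i + d + 1)) := by
      have he1 : i + (d + 1) + 1 = i + d + 1 + 1 := by omega
      have he2 : i + (d + 1) = i + d + 1 := by omega
      rw [he1, he2]
      nlinarith [hprod]
    exact le_of_mul_le_mul_right hgoal (mul_pos hmid0 hmid1)

private lemma key_lem (a : ℕ → ℝ) (ha0 : ∀ i, 0 ≤ a i)
    (ha : ∀ i, 1 ≤ i → a (i - 1) * a (i + 1) ≤ a i ^ 2)
    (ha' : ∀ i j k : ℕ, i ≤ j → j ≤ k → 0 < a i → 0 < a k → 0 < a j) :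
    ∀ x y : ℕ, x ≤ y → a x * a (y + 1) ≤ a (x + 1) * a y := by
  intro x y hxy
  have h := key_ratio a ha0 ha ha' (y - x) x
  rw [show x + (y - x) = y from by omega] at h
  exact h

private lemma sum_square_split (f : ℕ → ℕ → ℝ) :
    ∀ N : ℕ, ∑ i ∈ range N, ∑ j ∈ range N, f i j
      = (∑ i ∈ range N, ∑ j ∈ range i, (f i j + f j i)) + ∑ i ∈ range N, f i i := by
  intro N
  induction N with
  | zero => simp
  | succ N ih =>
    simp only [Finset.sum_range_succ, Finset.sum_add_distrib] at *
    linarith [ih]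

private lemma binet (P Q R S : ℕ → ℝ) (N : ℕ) :
    (∑ m ∈ range N, P m * R m) * (∑ m ∈ range N, Q m * S m)
      - (∑ m ∈ range N, Q m * R m) * (∑ m ∈ range N, P m * S m)
    = ∑ i ∈ range N, ∑ j ∈ range i,
        (P j * Q i - P i * Q j) * (R j * S i - R i * S j) := by
  rw [Finset.sum_mul_sum, Finset.sum_mul_sum, ← Finset.sum_sub_distrib]
  simp only [← Finset.sum_sub_distrib]
  rw [sum_square_split (fun i j => P i * R i * (Q j * S j) - Q i * R i * (P j * S j)) N]
  have hdiag : ∑ i ∈ range N,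
      (P i * R i * (Q i * S i) - Q i * R i * (P i * S i)) = 0 :=
    Finset.sum_eq_zero fun i _ => by ring
  rw [hdiag, add_zero]
  refine Finset.sum_congr rfl fun i _ => Finset.sum_congr rfl fun j _ => by ring

/-- Hoggar's theorem: the convolution of two nonnegative log-concave sequences
with no internal zeros is log-concave. -/
theorem convolution_log_concave (a b : ℕ → ℝ)
    (ha0 : ∀ i, 0 ≤ a i) (hb0 : ∀ i, 0 ≤ b i)
    (ha : ∀ i, 1 ≤ i → a (i - 1) * a (i + 1) ≤ a i ^ 2)
    (hb : ∀ i, 1 ≤ i → b (i - 1) * b (i + 1) ≤ b i ^ 2)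
    (ha' : ∀ i j k : ℕ, i ≤ j → j ≤ k → 0 < a i → 0 < a k → 0 < a j)
    (hb' : ∀ i j k : ℕ, i ≤ j → j ≤ k → 0 < b i → 0 < b k → 0 < b j)
    (c : ℕ → ℝ) (hc : ∀ k, c k = ∑ i ∈ Finset.range (k + 1), a i * b (k - i)) :
    ∀ k, 1 ≤ k → c (k - 1) * c (k + 1) ≤ c k ^ 2 := by
  have keya := key_lem a ha0 ha ha'
  have keyb := key_lem b hb0 hb hb'
  intro k hk
  obtain ⟨n, rfl⟩ : ∃ n, k = n + 1 := ⟨k - 1, by omega⟩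
  rw [show n + 1 - 1 = n from rfl]
  set P : ℕ → ℝ := fun m => a m with hP
  set Q : ℕ → ℝ := fun m => if m = 0 then 0 else a (m - 1) with hQ
  set R : ℕ → ℝ := fun m => if m ≤ n + 1 then b (n + 1 - m) else 0 with hR
  set S : ℕ → ℝ := fun m => b (n + 2 - m) with hS
  have hPR : ∑ m ∈ range (n + 3), P m * R m = c (n + 1) := by
    rw [hc (n + 1), show n + 3 = (n + 2) + 1 from rfl, Finset.sum_range_succ]
    have : R (n + 2) = 0 := by simp [hR]
    rw [this, mul_zero, add_zero]
    refine Finset.sum_congr rfl fun m hm => ?_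
    rw [Finset.mem_range] at hm
    simp [hP, hR, show m ≤ n + 1 from by omega]
  have hQS : ∑ m ∈ range (n + 3), Q m * S m = c (n + 1) := by
    rw [hc (n + 1), show n + 3 = (n + 2) + 1 from rfl, Finset.sum_range_succ']
    have : Q 0 = 0 := by simp [hQ]
    rw [this, zero_mul, add_zero]
    refine Finset.sum_congr rfl fun m hm => ?_
    rw [Finset.mem_range] at hm
    simp only [hQ, hS]
    rw [if_neg (by omega : ¬ m + 1 = 0)]
    rw [show m + 1 - 1 = m from rfl, show n + 2 - (m + 1) = n + 1 - m from by omega]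
  have hQR : ∑ m ∈ range (n + 3), Q m * R m = c n := by
    rw [hc n, show n + 3 = (n + 2) + 1 from rfl, Finset.sum_range_succ]
    have h1 : R (n + 2) = 0 := by simp [hR]
    rw [h1, mul_zero, add_zero, show n + 2 = (n + 1) + 1 from rfl, Finset.sum_range_succ']
    have h2 : Q 0 = 0 := by simp [hQ]
    rw [h2, zero_mul, add_zero]
    refine Finset.sum_congr rfl fun m hm => ?_
    rw [Finset.mem_range] at hm
    simp only [hQ, hR]
    rw [if_neg (by omega : ¬ m + 1 = 0), if_pos (by omega : m + 1 ≤ n + 1)]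
    rw [show m + 1 - 1 = m from rfl, show n + 1 - (m + 1) = n - m from by omega]
  have hPS : ∑ m ∈ range (n + 3), P m * S m = c (n + 2) := by
    rw [hc (n + 2)]
  have hD := binet P Q R S (n + 3)
  have hpos : 0 ≤ ∑ i ∈ range (n + 3), ∑ j ∈ range i,
      (P j * Q i - P i * Q j) * (R j * S i - R i * S j) := by
    refine Finset.sum_nonneg fun i hi => Finset.sum_nonneg fun j hj => ?_
    rw [Finset.mem_range] at hi hj
    have f1 : 0 ≤ P j * Q i - P i * Q j := by
      simp only [hP, hQ]
      rw [if_neg (by omega : ¬ i = 0)]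
      by_cases hj0 : j = 0
      · rw [if_pos hj0, mul_zero, sub_zero, hj0]
        exact mul_nonneg (ha0 _) (ha0 _)
      · rw [if_neg hj0]
        have h := keya (j - 1) (i - 1) (by omega)
        rw [show j - 1 + 1 = j from by omega, show i - 1 + 1 = i from by omega] at h
        linarith
    have f2 : 0 ≤ R j * S i - R i * S j := by
      simp only [hR, hS]
      rw [if_pos (by omega : j ≤ n + 1)]
      by_cases hi1 : i ≤ n + 1
      · rw [if_pos hi1]
        have h := keyb (n + 1 - i) (n + 1 - j) (by omega)
        rw [show n + 1 - i + 1 = n + 2 - i from by omega,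
          show n + 1 - j + 1 = n + 2 - j from by omega] at h
        linarith
      · rw [if_neg hi1, zero_mul, sub_zero]
        exact mul_nonneg (hb0 _) (hb0 _)
    exact mul_nonneg f1 f2
  rw [← hD] at hpos
  rw [hPR, hQS, hQR, hPS] at hpos
  nlinarith [hpos]
end

section
/- Let $I_1,\dots,I_n$ be independent Bernoulli random variables and let $\phi: \{0,1\}^n \to \mathbb{R}_{\ge 0}$ be increasing in each coordinate. Then for every $0 \le k \le n-1$ with $\Pr[\sum_i I_i = k] > 0$ and $\Pr[\sum_i I_i = k+1] > 0$, $E[\phi(I_1,\dots,I_n) \mid \sum_{i=1}^n I_i = k] \le E[\phi(I_1,\dots,I_n) \mid \sum_{i=1}^n I_i = k+1]$. -/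
open Finset

section EfronAux

lemma efron_middle {ι : Type*} [DecidableEq ι] (E : Finset ι) (s : ℕ)
    (hE : E.card = 2 * s + 1) (ψ : Finset ι → ℝ)
    (hψ : ∀ X Y : Finset ι, X ⊆ Y → ψ X ≤ ψ Y) :
    ∑ X ∈ E.powersetCard s, ψ X ≤ ∑ Y ∈ E.powersetCard (s + 1), ψ Y := by
  have key : ∑ X ∈ E.powersetCard s, ∑ i ∈ E \ X, ψ (insert i X)
      = ∑ Y ∈ E.powersetCard (s+1), ∑ i ∈ Y, ψ Y := by
    rw [Finset.sum_sigma', Finset.sum_sigma']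
    refine Finset.sum_nbij' (fun x => ⟨insert x.2 x.1, x.2⟩) (fun y => ⟨y.1.erase y.2, y.2⟩) ?_ ?_ ?_ ?_ ?_
    · rintro ⟨X, i⟩ hx
      simp only [Finset.mem_sigma, Finset.mem_powersetCard, Finset.mem_sdiff] at hx ⊢
      obtain ⟨⟨hXE, hXc⟩, hiE, hiX⟩ := hx
      refine ⟨⟨?_, ?_⟩, Finset.mem_insert_self _ _⟩
      · exact Finset.insert_subset hiE hXE
      · rw [Finset.card_insert_of_notMem hiX, hXc]
    · rintro ⟨Y, i⟩ hy
      simp only [Finset.mem_sigma, Finset.mem_powersetCard, Finset.mem_sdiff] at hy ⊢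
      obtain ⟨⟨hYE, hYc⟩, hiY⟩ := hy
      refine ⟨⟨(Finset.erase_subset _ _).trans hYE, ?_⟩, hYE hiY, Finset.notMem_erase _ _⟩
      rw [Finset.card_erase_of_mem hiY, hYc]
      omega
    · rintro ⟨X, i⟩ hx
      simp only [Finset.mem_sigma, Finset.mem_powersetCard, Finset.mem_sdiff] at hx
      simp [Finset.erase_insert_of_ne, Finset.erase_insert hx.2.2]
    · rintro ⟨Y, i⟩ hy
      simp only [Finset.mem_sigma, Finset.mem_powersetCard] at hy
      simp [Finset.insert_erase hy.2]
    · rintro ⟨X, i⟩ hx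
      simp only [Finset.mem_sigma, Finset.mem_powersetCard, Finset.mem_sdiff] at hx
      simp
  have h1 : (s+1 : ℝ) * ∑ X ∈ E.powersetCard s, ψ X
      ≤ ∑ X ∈ E.powersetCard s, ∑ i ∈ E \ X, ψ (insert i X) := by
    rw [Finset.mul_sum]
    refine Finset.sum_le_sum fun X hX => ?_
    rw [Finset.mem_powersetCard] at hX
    have hc : (E \ X).card = s + 1 := by
      rw [Finset.card_sdiff_of_subset hX.1, hE, hX.2]; omega
    calc (s+1 : ℝ) * ψ X = ∑ _i ∈ E \ X, ψ X := by
          rw [Finset.sum_const, hc]; push_cast; ring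
      _ ≤ ∑ i ∈ E \ X, ψ (insert i X) :=
          Finset.sum_le_sum fun i _ => hψ _ _ (Finset.subset_insert _ _)
  have h2 : ∑ Y ∈ E.powersetCard (s+1), ∑ i ∈ Y, ψ Y
      = (s+1 : ℝ) * ∑ Y ∈ E.powersetCard (s+1), ψ Y := by
    rw [Finset.mul_sum]
    refine Finset.sum_congr rfl fun Y hY => ?_
    rw [Finset.mem_powersetCard] at hY
    rw [Finset.sum_const, hY.2]; push_cast; ring
  have := h1.trans_eq (key.trans h2)
  have hs : (0:ℝ) < s + 1 := by positivity
  exact le_of_mul_le_mul_left this hs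

lemma efron_pairs {ι : Type*} [Fintype ι] [DecidableEq ι] (k : ℕ)
    (g : Finset ι → Finset ι → ℝ) :
    ∑ A ∈ (univ : Finset ι).powersetCard k, ∑ B ∈ (univ : Finset ι).powersetCard (k+1), g A B
    = ∑ P ∈ ((univ ×ˢ univ : Finset (Finset ι × Finset ι)).filter
        fun P => P.1 ⊆ P.2 ∧ P.1.card + P.2.card = 2*k+1),
        ∑ X ∈ (P.2 \ P.1).powersetCard (k - P.1.card), g (P.1 ∪ X) (P.2 \ X) := by
  rw [Finset.sum_sigma', Finset.sum_sigma']
  refine Finset.sum_nbij' (fun x => ⟨(x.1 ∩ x.2, x.1 ∪ x.2), x.1 \ x.2⟩)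
    (fun y => ⟨y.1.1 ∪ y.2, y.1.2 \ y.2⟩) ?_ ?_ ?_ ?_ ?_
  · rintro ⟨A, B⟩ hx
    simp only [Finset.mem_sigma, Finset.mem_powersetCard, Finset.mem_filter,
      Finset.mem_product, Finset.mem_univ, Finset.subset_univ, true_and, and_true] at hx ⊢
    obtain ⟨hA, hB⟩ := hx
    have hABd : A \ B = A \ (A ∩ B) := by
      ext a; simp only [Finset.mem_sdiff, Finset.mem_inter]; tauto
    refine ⟨⟨Finset.inter_subset_left.trans Finset.subset_union_left, ?_⟩, ?_, ?_⟩
    · rw [Finset.card_inter_add_card_union, hA, hB]; ring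
    · intro a ha; simp only [Finset.mem_sdiff, Finset.mem_union, Finset.mem_inter] at ha ⊢; tauto
    · rw [hABd, Finset.card_sdiff_of_subset Finset.inter_subset_left, hA]
  · rintro ⟨⟨C, D⟩, X⟩ hy
    simp only [Finset.mem_sigma, Finset.mem_powersetCard, Finset.mem_filter,
      Finset.mem_product, Finset.mem_univ, Finset.subset_univ, true_and, and_true] at hy ⊢
    obtain ⟨⟨hCD, hcard⟩, hXsub, hXcard⟩ := hy
    have hCk : C.card ≤ k := by
      have := Finset.card_le_card hCD; omega
    have hXD : X ⊆ D := fun a ha => (Finset.mem_sdiff.mp (hXsub ha)).1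
    have hXC : ∀ a ∈ X, a ∉ C := fun a ha => (Finset.mem_sdiff.mp (hXsub ha)).2
    constructor
    · rw [Finset.card_union_of_disjoint (Finset.disjoint_left.mpr fun a ha => hXC a ha).symm]
      omega
    · have := Finset.card_le_card hXD
      rw [Finset.card_sdiff_of_subset hXD]
      omega
  · rintro ⟨A, B⟩ hx
    simp only [Finset.mem_sigma, Finset.mem_powersetCard_univ] at hx
    have h1 : (A ∩ B) ∪ (A \ B) = A := by ext a; simp; tauto
    have h2 : (A ∪ B) \ (A \ B) = B := by ext a; simp; tauto
    simp only [h1, h2]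
  · rintro ⟨⟨C, D⟩, X⟩ hy
    simp only [Finset.mem_sigma, Finset.mem_filter, Finset.mem_product, Finset.mem_univ,
      true_and, Finset.mem_powersetCard] at hy
    obtain ⟨⟨hCD, hcard⟩, hXsub, hXcard⟩ := hy
    have hX' : ∀ a, a ∈ X → a ∈ D ∧ a ∉ C := fun a ha => Finset.mem_sdiff.mp (hXsub ha)
    have hCD' : ∀ a, a ∈ C → a ∈ D := fun a ha => hCD ha
    have h1 : (C ∪ X) ∩ (D \ X) = C := by
      ext a; simp only [Finset.mem_inter, Finset.mem_union, Finset.mem_sdiff]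
      have := hX' a; have := hCD' a; tauto
    have h2 : (C ∪ X) ∪ (D \ X) = D := by
      ext a; simp only [Finset.mem_union, Finset.mem_sdiff]
      have := hX' a; have := hCD' a; tauto
    have h3 : (C ∪ X) \ (D \ X) = X := by
      ext a; simp only [Finset.mem_union, Finset.mem_sdiff]
      have := hX' a; have := hCD' a; tauto
    simp only [h1, h2, h3]
  · rintro ⟨A, B⟩ hx
    simp only [Finset.mem_sigma, Finset.mem_powersetCard_univ] at hx
    have h1 : (A ∩ B) ∪ (A \ B) = A := by ext a; simp; tauto
    have h2 : (A ∪ B) \ (A \ B) = B := by ext a; simp; tauto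
    simp only [h1, h2]

lemma efron_boolsum (n m : ℕ) (G : (Fin n → Bool) → ℝ) :
    ∑ b ∈ Finset.univ.filter
        (fun b : Fin n → Bool => (Finset.univ.filter (fun j => b j = true)).card = m), G b
    = ∑ A ∈ (univ : Finset (Fin n)).powersetCard m, G (fun j => decide (j ∈ A)) := by
  refine Finset.sum_nbij' (fun b => Finset.univ.filter (fun j => b j = true))
    (fun A => fun j => decide (j ∈ A)) ?_ ?_ ?_ ?_ ?_
  · intro b hb
    simp only [Finset.mem_filter, Finset.mem_univ, true_and] at hb
    simp [Finset.mem_powersetCard, hb]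
  · intro A hA
    simp only [Finset.mem_powersetCard, Finset.subset_univ, true_and] at hA
    simp only [Finset.mem_filter, Finset.mem_univ, true_and, decide_eq_true_eq]
    rw [← hA]
    congr 1
    ext j
    simp
  · intro b hb
    funext j
    simp
  · intro A hA
    ext j
    simp
  · intro b hb
    congr 1
    funext j
    simp

end EfronAux


/-- Efron's monotonicity theorem for independent Bernoulli random variables:
the conditional expectation of a nonnegative coordinatewise-increasing function
given the sum of the variables is increasing in the value of the sum. -/
theorem efron_monotonicity (n : ℕ) (p : Fin n → ℝ)
    (hp0 : ∀ i, 0 < p i) (hp1 : ∀ i, p i < 1)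
    (φ : (Fin n → Bool) → ℝ) (hφ0 : ∀ b, 0 ≤ φ b)
    (hφmono : ∀ b b' : Fin n → Bool, (∀ i, b i = true → b' i = true) → φ b ≤ φ b')
    (W : (Fin n → Bool) → ℝ)
    (hW : ∀ b, W b = ∏ j : Fin n, (if b j then p j else 1 - p j)) :
    ∀ k : ℕ, k ≤ n - 1 →
      0 < (∑ b ∈ Finset.univ.filter
            (fun b : Fin n → Bool => (Finset.univ.filter (fun j => b j = true)).card = k),
            W b) →
      0 < (∑ b ∈ Finset.univ.filter
            (fun b : Fin n → Bool => (Finset.univ.filter (fun j => b j = true)).card = k + 1),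
            W b) →
      (∑ b ∈ Finset.univ.filter
          (fun b : Fin n → Bool => (Finset.univ.filter (fun j => b j = true)).card = k),
          W b * φ b) /
        (∑ b ∈ Finset.univ.filter
          (fun b : Fin n → Bool => (Finset.univ.filter (fun j => b j = true)).card = k),
          W b) ≤
      (∑ b ∈ Finset.univ.filter
          (fun b : Fin n → Bool => (Finset.univ.filter (fun j => b j = true)).card = k + 1),
          W b * φ b) /
        (∑ b ∈ Finset.univ.filter
          (fun b : Fin n → Bool => (Finset.univ.filter (fun j => b j = true)).card = k + 1),
          W b) := by
  intro k hk h0 h1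
  set f : Finset (Fin n) → ℝ := fun A => φ (fun j => decide (j ∈ A)) with hf
  set w : Finset (Fin n) → ℝ := fun A => ∏ j : Fin n, (if j ∈ A then p j else 1 - p j) with hw
  have hWf : ∀ A : Finset (Fin n), W (fun j => decide (j ∈ A)) = w A := by
    intro A; rw [hW]; exact Finset.prod_congr rfl fun j _ => by simp
  have ew : ∀ m : ℕ, (∑ b ∈ Finset.univ.filter
        (fun b : Fin n → Bool => (Finset.univ.filter (fun j => b j = true)).card = m), W b)
      = ∑ A ∈ (univ : Finset (Fin n)).powersetCard m, w A := by
    intro m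
    rw [efron_boolsum n m W]
    exact Finset.sum_congr rfl fun A _ => hWf A
  have ewf : ∀ m : ℕ, (∑ b ∈ Finset.univ.filter
        (fun b : Fin n → Bool => (Finset.univ.filter (fun j => b j = true)).card = m),
        W b * φ b)
      = ∑ A ∈ (univ : Finset (Fin n)).powersetCard m, w A * f A := by
    intro m
    rw [efron_boolsum n m (fun b => W b * φ b)]
    exact Finset.sum_congr rfl fun A _ => by rw [hWf]
  rw [ew] at h0 h1
  rw [ew, ew, ewf, ewf, div_le_div_iff₀ h0 h1, mul_comm (∑ A ∈ _, w A * f A)]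
  -- goal : (∑_B w) * (∑_A w f) ≤ (∑_B w f) * (∑_A w)  (check orientation below)
  have hw0 : ∀ A : Finset (Fin n), 0 < w A := by
    intro A
    refine Finset.prod_pos fun j _ => ?_
    by_cases h : j ∈ A <;> simp [h]
    · exact hp0 j
    · linarith [hp1 j]
  have hfmono : ∀ A B : Finset (Fin n), A ⊆ B → f A ≤ f B := by
    intro A B hAB
    refine hφmono _ _ fun i hi => ?_
    simp only [decide_eq_true_eq] at hi ⊢
    exact hAB hi
  have hwmul : ∀ A B : Finset (Fin n), w A * w B = w (A ∩ B) * w (A ∪ B) := by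
    intro A B
    simp only [hw]
    rw [← Finset.prod_mul_distrib, ← Finset.prod_mul_distrib]
    refine Finset.prod_congr rfl fun j _ => ?_
    by_cases hA : j ∈ A <;> by_cases hB : j ∈ B <;>
      simp [hA, hB, Finset.mem_inter, Finset.mem_union] <;> ring
  have key : 0 ≤ ∑ A ∈ (univ : Finset (Fin n)).powersetCard k,
      ∑ B ∈ (univ : Finset (Fin n)).powersetCard (k+1), w A * w B * (f B - f A) := by
    rw [efron_pairs k (fun A B => w A * w B * (f B - f A))]
    refine Finset.sum_nonneg fun P hP => ?_
    obtain ⟨C, D⟩ := P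
    simp only [Finset.mem_filter, Finset.mem_product, Finset.mem_univ, true_and] at hP
    obtain ⟨hCD, hcard⟩ := hP
    have hCk : C.card ≤ k := by have := Finset.card_le_card hCD; omega
    set s : ℕ := k - C.card with hs
    set E : Finset (Fin n) := D \ C with hE
    have hEcard : E.card = 2 * s + 1 := by
      rw [hE, Finset.card_sdiff_of_subset hCD]; omega
    have memfacts : ∀ X ∈ E.powersetCard s, (C ∪ X) ∩ (D \ X) = C ∧ (C ∪ X) ∪ (D \ X) = D := by
      intro X hX
      rw [Finset.mem_powersetCard] at hX
      have hX' : ∀ a, a ∈ X → a ∈ D ∧ a ∉ C := fun a ha => Finset.mem_sdiff.mp (hX.1 ha)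
      have hCD' : ∀ a, a ∈ C → a ∈ D := fun a ha => hCD ha
      constructor
      · ext a; simp only [Finset.mem_inter, Finset.mem_union, Finset.mem_sdiff]
        have := hX' a; have := hCD' a; tauto
      · ext a; simp only [Finset.mem_union, Finset.mem_sdiff]
        have := hX' a; have := hCD' a; tauto
    have inner_eq : ∑ X ∈ E.powersetCard s, w (C ∪ X) * w (D \ X) * (f (D \ X) - f (C ∪ X))
        = w C * w D * (∑ X ∈ E.powersetCard s, f (D \ X) - ∑ X ∈ E.powersetCard s, f (C ∪ X)) := by
      rw [mul_sub, Finset.mul_sum, Finset.mul_sum, ← Finset.sum_sub_distrib]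
      refine Finset.sum_congr rfl fun X hX => ?_
      obtain ⟨m1, m2⟩ := memfacts X hX
      have : w (C ∪ X) * w (D \ X) = w C * w D := by rw [hwmul, m1, m2]
      rw [this]; ring
    have reflect : ∑ X ∈ E.powersetCard s, f (D \ X)
        = ∑ Y ∈ E.powersetCard (s+1), f (C ∪ Y) := by
      refine Finset.sum_nbij' (fun X => E \ X) (fun Y => E \ Y) ?_ ?_ ?_ ?_ ?_
      · intro X hX
        rw [Finset.mem_powersetCard] at hX ⊢
        refine ⟨Finset.sdiff_subset, ?_⟩
        rw [Finset.card_sdiff_of_subset hX.1, hEcard, hX.2]; omega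
      · intro Y hY
        rw [Finset.mem_powersetCard] at hY ⊢
        refine ⟨Finset.sdiff_subset, ?_⟩
        rw [Finset.card_sdiff_of_subset hY.1, hEcard, hY.2]; omega
      · intro X hX
        rw [Finset.mem_powersetCard] at hX
        exact Finset.sdiff_sdiff_eq_self hX.1
      · intro Y hY
        rw [Finset.mem_powersetCard] at hY
        exact Finset.sdiff_sdiff_eq_self hY.1
      · intro X hX
        rw [Finset.mem_powersetCard] at hX
        congr 1
        have hX' : ∀ a, a ∈ X → a ∈ D ∧ a ∉ C := fun a ha => Finset.mem_sdiff.mp (hX.1 ha)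
        have hCD' : ∀ a, a ∈ C → a ∈ D := fun a ha => hCD ha
        ext a; simp only [Finset.mem_union, Finset.mem_sdiff, hE]
        have := hX' a; have := hCD' a; tauto
    have middle : ∑ X ∈ E.powersetCard s, f (C ∪ X) ≤ ∑ Y ∈ E.powersetCard (s+1), f (C ∪ Y) :=
      efron_middle E s hEcard (fun Z => f (C ∪ Z))
        (fun X Y hXY => hfmono _ _ (Finset.union_subset_union_right hXY))
    rw [inner_eq, reflect]
    exact mul_nonneg (mul_nonneg (hw0 C).le (hw0 D).le) (sub_nonneg.mpr middle)
  -- expand key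
  have expand : ∑ A ∈ (univ : Finset (Fin n)).powersetCard k,
      ∑ B ∈ (univ : Finset (Fin n)).powersetCard (k+1), w A * w B * (f B - f A)
      = (∑ A ∈ (univ : Finset (Fin n)).powersetCard k, w A) *
          (∑ B ∈ (univ : Finset (Fin n)).powersetCard (k+1), w B * f B) -
        (∑ A ∈ (univ : Finset (Fin n)).powersetCard k, w A * f A) *
          (∑ B ∈ (univ : Finset (Fin n)).powersetCard (k+1), w B) := by
    rw [Finset.sum_mul_sum, Finset.sum_mul_sum, ← Finset.sum_sub_distrib]
    refine Finset.sum_congr rfl fun A _ => ?_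
    rw [← Finset.sum_sub_distrib]
    refine Finset.sum_congr rfl fun B _ => ?_
    ring
  rw [expand] at key
  linarith [key]
end

section
/- Let $X$ be a $\{0,\dots,n\}$-valued random variable with log-concave probability mass function $u$, and let $I$ be an independent Bernoulli random variable with parameter $p \in (0,1)$. Let $\psi: \{0,\dots,n\} \times \{0,1\} \to \mathbb{R}_{\ge 0}$ be increasing in both arguments. Then for all $0 \le k \le n$, $E[\psi(X,I) \mid X+I = k] \le E[\psi(X,I) \mid X+I = k+1]$, whenever both conditioning events have positive probability. -/
open Finset

lemma sum_formula (n k : ℕ) (g : ℕ → Bool → ℝ) :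
    (∑ x ∈ Finset.range (n+1), ∑ j : Bool, (if x + (if j then 1 else 0) = k then g x j else 0))
    = (if k ≤ n then g k false else 0) +
      (if 1 ≤ k ∧ k ≤ n + 1 then g (k-1) true else 0) := by
  simp only [Fintype.sum_bool, if_true, if_false, Bool.false_eq_true, Finset.sum_add_distrib]
  rw [add_comm]
  congr 1
  · simp only [add_zero]
    rw [Finset.sum_ite_eq' (Finset.range (n+1)) k (fun x => g x false)]
    simp [Finset.mem_range, Nat.lt_succ_iff]
  · cases k with
    | zero => simp
    | succ m =>
      simp only [add_left_inj]
      rw [Finset.sum_ite_eq' (Finset.range (n+1)) m (fun x => g x true)]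
      simp only [Finset.mem_range, Nat.lt_succ_iff, Nat.succ_sub_one]
      split_ifs with h1 h2 h2 <;> first | rfl | omega

/-- Monotonicity of conditional expectation for the sum of a log-concave
variable `X` on `{0,…,n}` and an independent Bernoulli variable `I`:
if `ψ` is nonnegative and increasing in both arguments, then
`E[ψ(X,I) | X+I = k]` is increasing in `k`. -/
theorem log_concave_plus_bernoulli_monotone (n : ℕ) (u : ℕ → ℝ)
    (hu0 : ∀ i, 0 ≤ u i) (hupmf : ∑ i ∈ Finset.range (n + 1), u i = 1)
    (hulc : ∀ i, 1 ≤ i → i ≤ n - 1 → u (i - 1) * u (i + 1) ≤ u i ^ 2)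
    (p : ℝ) (hp0 : 0 < p) (hp1 : p < 1)
    (ψ : ℕ → Bool → ℝ) (hψ0 : ∀ x j, 0 ≤ ψ x j)
    (hψmono : ∀ x x' : ℕ, ∀ j j' : Bool, x ≤ x' → (j = true → j' = true) →
      ψ x j ≤ ψ x' j')
    (D : ℕ → ℝ) (N : ℕ → ℝ)
    (hD : ∀ k, D k = ∑ x ∈ Finset.range (n + 1), ∑ j : Bool,
      (if x + (if j then 1 else 0) = k then u x * (if j then p else 1 - p) else 0))
    (hN : ∀ k, N k = ∑ x ∈ Finset.range (n + 1), ∑ j : Bool,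
      (if x + (if j then 1 else 0) = k then u x * (if j then p else 1 - p) * ψ x j else 0)) :
    ∀ k : ℕ, k ≤ n → 0 < D k → 0 < D (k + 1) →
      N k / D k ≤ N (k + 1) / D (k + 1) := by
  intro k hk hDk hDk1
  have hp1' : (0:ℝ) ≤ 1 - p := by linarith
  have hm1 : ψ k false ≤ ψ (k+1) false := hψmono k (k+1) false false (by omega) (by simp)
  have hm2 : ψ (k-1) true ≤ ψ k true := hψmono (k-1) k true true (Nat.sub_le k 1) (fun h => h)
  have hm3 : ψ k false ≤ ψ k true := hψmono k k false true le_rfl (by simp)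
  rw [div_le_div_iff₀ hDk hDk1, hD k, hD (k+1), hN k, hN (k+1),
    sum_formula, sum_formula, sum_formula, sum_formula]
  have hc1 : (1 ≤ k + 1 ∧ k + 1 ≤ n + 1) := ⟨by omega, by omega⟩
  by_cases h1 : 1 ≤ k <;> by_cases h2 : k + 1 ≤ n
  · -- 1 ≤ k and k + 1 ≤ n : full case, uses log-concavity
    simp only [if_pos hk, Nat.add_sub_cancel, if_pos hc1, if_pos h2,
      if_pos (And.intro h1 (by omega : k ≤ n + 1)),
      if_true, if_false, Bool.false_eq_true, add_zero, zero_add, zero_mul, mul_zero]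
    have hlc : u (k - 1) * u (k + 1) ≤ u k ^ 2 := hulc k h1 (by omega)
    nlinarith [mul_nonneg (mul_nonneg (mul_nonneg (hu0 k) (hu0 (k+1)))
        (mul_nonneg hp1' hp1')) (sub_nonneg.2 hm1),
      mul_nonneg (mul_nonneg (mul_nonneg (hu0 (k-1)) (hu0 k))
        (mul_nonneg hp0.le hp0.le)) (sub_nonneg.2 hm2),
      mul_nonneg (mul_nonneg (mul_nonneg (hu0 (k-1)) (hu0 (k+1)))
        (mul_nonneg hp0.le hp1')) (sub_nonneg.2 hm1),
      mul_nonneg (mul_nonneg (mul_nonneg (hu0 (k-1)) (hu0 (k+1)))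
        (mul_nonneg hp0.le hp1')) (sub_nonneg.2 hm2),
      mul_nonneg (mul_nonneg (sub_nonneg.2 hlc) (mul_nonneg hp0.le hp1'))
        (sub_nonneg.2 hm3)]
  · -- 1 ≤ k and k = n
    simp only [if_pos hk, Nat.add_sub_cancel, if_pos hc1, if_neg h2,
      if_pos (And.intro h1 (by omega : k ≤ n + 1)),
      if_true, if_false, Bool.false_eq_true, add_zero, zero_add, zero_mul, mul_zero]
    nlinarith [mul_nonneg (mul_nonneg (mul_nonneg (hu0 k) (hu0 k))
        (mul_nonneg hp1' hp0.le)) (sub_nonneg.2 hm3),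
      mul_nonneg (mul_nonneg (mul_nonneg (hu0 (k-1)) (hu0 k))
        (mul_nonneg hp0.le hp0.le)) (sub_nonneg.2 hm2)]
  · -- k = 0 and k + 1 ≤ n
    simp only [if_pos hk, Nat.add_sub_cancel, if_pos hc1, if_pos h2,
      if_neg (fun h : 1 ≤ k ∧ k ≤ n + 1 => h1 h.1),
      if_true, if_false, Bool.false_eq_true, add_zero, zero_add, zero_mul, mul_zero]
    nlinarith [mul_nonneg (mul_nonneg (mul_nonneg (hu0 k) (hu0 (k+1)))
        (mul_nonneg hp1' hp1')) (sub_nonneg.2 hm1),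
      mul_nonneg (mul_nonneg (mul_nonneg (hu0 k) (hu0 k))
        (mul_nonneg hp1' hp0.le)) (sub_nonneg.2 hm3)]
  · -- k = 0 and k = n
    simp only [if_pos hk, Nat.add_sub_cancel, if_pos hc1, if_neg h2,
      if_neg (fun h : 1 ≤ k ∧ k ≤ n + 1 => h1 h.1),
      if_true, if_false, Bool.false_eq_true, add_zero, zero_add, zero_mul, mul_zero]
    nlinarith [mul_nonneg (mul_nonneg (mul_nonneg (hu0 k) (hu0 k))
        (mul_nonneg hp1' hp0.le)) (sub_nonneg.2 hm3)]
end

section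
/- Let $B_1,\dots,B_n$ be independent Bernoulli random variables with $\Pr[B_i=1]=1/i$. Let $A_1,\dots,A_m$ be distinct $k$-subsets of $\{1,\dots,n\}$ and $E_j = \{B_i = 1 \text{ for all } i \in A_j\}$. Then for $1 \le k \le n-1$, $\Pr[E_1 \cup \cdots \cup E_m \mid \sum_{i=1}^n B_i = k] \le \Pr[E_1 \cup \cdots \cup E_m \mid \sum_{i=1}^n B_i = k+1]$. -/
open Finset

section Aux

variable {α : Type*} [Fintype α] [DecidableEq α]

private def gg (w : α → ℝ) (S : Finset α) : ℝ := ∏ i ∈ Finset.univ \ S, w i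

private lemma gg_nonneg {w : α → ℝ} (hw : ∀ i, 0 ≤ w i) (S : Finset α) : 0 ≤ gg w S :=
  Finset.prod_nonneg fun i _ => hw i

private lemma gg_exchange (w : α → ℝ) {S T : Finset α} {x : α} (hxS : x ∉ S) (hxT : x ∈ T) :
    gg w S * gg w T = gg w (insert x S) * gg w (T.erase x) := by
  have h1 : gg w S = w x * gg w (insert x S) := by
    unfold gg
    rw [Finset.sdiff_insert, ← Finset.mul_prod_erase _ _
      (show x ∈ Finset.univ \ S by simp [hxS])]
  have h2 : gg w (T.erase x) = w x * gg w T := by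
    unfold gg
    have he : Finset.univ \ T.erase x = insert x (Finset.univ \ T) := by
      ext y
      by_cases hy : y = x
      · subst hy; simp [hxT]
      · simp [hy, Finset.mem_erase]
    rw [he, Finset.prod_insert (by simp [hxT])]
  rw [h1, h2]; ring

private lemma core (w : α → ℝ) (hw : ∀ i, 0 ≤ w i) (k : ℕ) (𝒜 : Finset (Finset α))
    (h𝒜 : ∀ S ∈ 𝒜, S.card = k) (𝒰 : Finset (Finset α))
    (h𝒰 : ∀ T : Finset α, T.card = k + 1 → (∃ S ∈ 𝒜, S ⊆ T) → T ∈ 𝒰) :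
    (∑ S ∈ 𝒜, gg w S) * (∑ T ∈ univ.filter (fun T : Finset α => T.card = k + 1), gg w T) ≤
    (∑ T ∈ 𝒰, gg w T) *
    (∑ S ∈ univ.filter (fun S : Finset α => S.card = k), gg w S) := by
  classical
  set 𝒯 := univ.filter (fun T : Finset α => T.card = k + 1 ∧ ∃ S ∈ 𝒜, S ⊆ T) with h𝒯
  set P1 := univ.filter (fun T : Finset α => T.card = k + 1) with hP1
  set P0 := univ.filter (fun S : Finset α => S.card = k) with hP0
  have key : ∀ S ∈ 𝒜, ∀ T ∈ P1,
      gg w S * gg w T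
        = ∑ x ∈ T \ S, gg w (insert x S) * gg w (T.erase x) / ((T \ S).card : ℝ) := by
    intro S hS T hT
    have hTcard : T.card = k + 1 := (Finset.mem_filter.mp hT).2
    have hne : (T \ S).Nonempty := by
      rw [Finset.sdiff_nonempty]
      intro hsub
      have := Finset.card_le_card hsub
      rw [hTcard, h𝒜 S hS] at this
      omega
    have hc0 : ((T \ S).card : ℝ) ≠ 0 := Nat.cast_ne_zero.mpr hne.card_pos.ne'
    calc gg w S * gg w T
        = ∑ x ∈ T \ S, gg w S * gg w T / ((T \ S).card : ℝ) := by
          rw [Finset.sum_const, nsmul_eq_mul]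
          field_simp
      _ = ∑ x ∈ T \ S, gg w (insert x S) * gg w (T.erase x) / ((T \ S).card : ℝ) := by
          refine Finset.sum_congr rfl fun x hx => ?_
          obtain ⟨hxT, hxS⟩ := Finset.mem_sdiff.mp hx
          rw [gg_exchange w hxS hxT]
  rw [Finset.sum_mul_sum, Finset.sum_mul_sum]
  calc ∑ S ∈ 𝒜, ∑ T ∈ P1, gg w S * gg w T
      = ∑ S ∈ 𝒜, ∑ T ∈ P1, ∑ x ∈ T \ S,
          gg w (insert x S) * gg w (T.erase x) / ((T \ S).card : ℝ) :=
        Finset.sum_congr rfl fun S hS => Finset.sum_congr rfl fun T hT => key S hS T hT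
    _ = ∑ q ∈ (𝒜 ×ˢ P1).sigma (fun p => p.2 \ p.1),
          gg w (insert q.2 q.1.1) * gg w (q.1.2.erase q.2) / (((q.1.2 \ q.1.1).card : ℝ)) := by
        rw [Finset.sum_sigma, Finset.sum_product]
    _ = ∑ q ∈ (𝒯 ×ˢ P0).sigma (fun p => p.1.filter (fun x => x ∉ p.2 ∧ p.1.erase x ∈ 𝒜)),
          gg w q.1.1 * gg w q.1.2 / (((q.1.2 \ q.1.1).card : ℝ) + 1) := by
        refine Finset.sum_nbij' (i := fun q => ⟨(insert q.2 q.1.1, q.1.2.erase q.2), q.2⟩)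
          (j := fun q => ⟨(q.1.1.erase q.2, insert q.2 q.1.2), q.2⟩) ?_ ?_ ?_ ?_ ?_
        · rintro ⟨⟨S, T⟩, x⟩ hq
          simp only [Finset.mem_sigma, Finset.mem_product, Finset.mem_sdiff, hP1, h𝒯, hP0,
            Finset.mem_filter, Finset.mem_univ, true_and] at hq ⊢
          obtain ⟨⟨hS, hTcard⟩, hxT, hxS⟩ := hq
          refine ⟨⟨⟨?_, S, hS, Finset.subset_insert x S⟩, ?_⟩, ?_, ?_, ?_⟩
          · rw [Finset.card_insert_of_notMem hxS, h𝒜 S hS]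
          · rw [Finset.card_erase_of_mem hxT, hTcard]; omega
          · exact Finset.mem_insert_self x S
          · exact Finset.notMem_erase x T
          · rw [Finset.erase_insert hxS]; exact hS
        · rintro ⟨⟨T, S'⟩, x⟩ hq
          simp only [Finset.mem_sigma, Finset.mem_product, Finset.mem_sdiff, hP1, h𝒯, hP0,
            Finset.mem_filter, Finset.mem_univ, true_and] at hq ⊢
          obtain ⟨⟨⟨hTcard, -⟩, hS'card⟩, hxT, hxS', hTx⟩ := hq
          refine ⟨⟨hTx, ?_⟩, ?_, ?_⟩
          · rw [Finset.card_insert_of_notMem hxS', hS'card]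
          · exact Finset.mem_insert_self x S'
          · exact Finset.notMem_erase x T
        · rintro ⟨⟨S, T⟩, x⟩ hq
          simp only [Finset.mem_sigma, Finset.mem_product, Finset.mem_sdiff] at hq
          obtain ⟨-, hxT, hxS⟩ := hq
          simp [Finset.erase_insert hxS, Finset.insert_erase hxT]
        · rintro ⟨⟨T, S'⟩, x⟩ hq
          simp only [Finset.mem_sigma, Finset.mem_product, Finset.mem_filter] at hq
          obtain ⟨-, hxT, hxS', -⟩ := hq
          simp [Finset.erase_insert hxS', Finset.insert_erase hxT]
        · rintro ⟨⟨S, T⟩, x⟩ hq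
          simp only [Finset.mem_sigma, Finset.mem_product, Finset.mem_sdiff] at hq
          obtain ⟨-, hxT, hxS⟩ := hq
          have hx' : x ∈ T \ S := Finset.mem_sdiff.mpr ⟨hxT, hxS⟩
          have hset : (T.erase x) \ (insert x S) = (T \ S).erase x := by
            ext y
            simp only [Finset.mem_sdiff, Finset.mem_erase, Finset.mem_insert, not_or]
            tauto
          have hnat : ((T.erase x) \ insert x S).card + 1 = (T \ S).card := by
            rw [hset, Finset.card_erase_of_mem hx']
            have := Finset.card_pos.mpr ⟨x, hx'⟩
            omega
          have hden : (((T.erase x) \ insert x S).card : ℝ) + 1 = ((T \ S).card : ℝ) := by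
            exact_mod_cast hnat
          rw [hden]
    _ = ∑ p ∈ 𝒯 ×ˢ P0, ((p.1.filter (fun x => x ∉ p.2 ∧ p.1.erase x ∈ 𝒜)).card : ℝ)
          * (gg w p.1 * gg w p.2 / (((p.2 \ p.1).card : ℝ) + 1)) := by
        rw [Finset.sum_sigma]
        refine Finset.sum_congr rfl fun p hp => ?_
        dsimp only
        rw [Finset.sum_const, nsmul_eq_mul]
    _ ≤ ∑ p ∈ 𝒯 ×ˢ P0, gg w p.1 * gg w p.2 := by
        refine Finset.sum_le_sum fun p hp => ?_
        obtain ⟨T, S'⟩ := p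
        simp only [Finset.mem_product, h𝒯, hP0, Finset.mem_filter, Finset.mem_univ,
          true_and] at hp
        obtain ⟨⟨hTcard, -⟩, hS'card⟩ := hp
        have hQsub : T.filter (fun x => x ∉ S' ∧ T.erase x ∈ 𝒜) ⊆ T \ S' := by
          intro x hx
          simp only [Finset.mem_filter] at hx
          exact Finset.mem_sdiff.mpr ⟨hx.1, hx.2.1⟩
        have h1 : (T.filter (fun x => x ∉ S' ∧ T.erase x ∈ 𝒜)).card ≤ (S' \ T).card + 1 := by
          have h2 := Finset.card_le_card hQsub
          have h3 := Finset.card_sdiff_add_card_inter T S'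
          have h4 := Finset.card_sdiff_add_card_inter S' T
          rw [Finset.inter_comm] at h4
          omega
        have hgg : 0 ≤ gg w T * gg w S' := mul_nonneg (gg_nonneg hw _) (gg_nonneg hw _)
        have hd : (0:ℝ) < ((S' \ T).card : ℝ) + 1 := by positivity
        calc ((T.filter (fun x => x ∉ S' ∧ T.erase x ∈ 𝒜)).card : ℝ)
              * (gg w T * gg w S' / (((S' \ T).card : ℝ) + 1))
            ≤ (((S' \ T).card : ℝ) + 1) * (gg w T * gg w S' / (((S' \ T).card : ℝ) + 1)) := by
              refine mul_le_mul_of_nonneg_right ?_ (div_nonneg hgg hd.le)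
              exact_mod_cast h1
          _ = gg w T * gg w S' := by field_simp
    _ = ∑ T ∈ 𝒯, ∑ S ∈ P0, gg w T * gg w S := Finset.sum_product _ _ _
    _ ≤ ∑ T ∈ 𝒰, ∑ S ∈ P0, gg w T * gg w S := by
        refine Finset.sum_le_sum_of_subset_of_nonneg ?_ fun T _ _ => ?_
        · intro T hT
          rw [h𝒯, Finset.mem_filter] at hT
          exact h𝒰 T hT.2.1 hT.2.2
        · exact Finset.sum_nonneg fun S _ =>
            mul_nonneg (gg_nonneg hw _) (gg_nonneg hw _)

private lemma sum_transfer {n : ℕ} (w : Fin n → ℝ) (P : Finset (Fin n) → Prop) [DecidablePred P]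
    (V : (Fin n → Bool) → ℝ) (C : ℝ)
    (hV : ∀ b, V b = C * gg w (univ.filter fun i => b i = true)) :
    ∑ b ∈ univ.filter (fun b : Fin n → Bool => P (univ.filter fun i => b i = true)), V b
      = C * ∑ S ∈ univ.filter P, gg w S := by
  rw [Finset.mul_sum]
  refine Finset.sum_nbij' (i := fun b => univ.filter fun i => b i = true)
    (j := fun S i => decide (i ∈ S)) ?_ ?_ ?_ ?_ ?_
  · intro b hb
    simp only [Finset.mem_filter, Finset.mem_univ, true_and] at hb ⊢
    exact hb
  · intro S hS
    simp only [Finset.mem_filter, Finset.mem_univ, true_and] at hS ⊢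
    have : (univ.filter fun i => decide (i ∈ S) = true) = S := by
      ext i; simp
    rw [this]; exact hS
  · intro b _
    funext i
    by_cases h : b i <;> simp [h]
  · intro S _
    ext i; simp
  · intro b _
    exact hV b

end Aux

/-- For independent Bernoullis `B_i` with mean `1/i` (`i = 1,…,n`), the
conditional probability of a union of events `E_j = {B_i = 1 ∀ i ∈ A_j}`,
where the `A_j` are distinct `k`-subsets, given `∑ B_i = k`, is at most the
same conditional probability given `∑ B_i = k + 1`. -/
theorem union_upset_conditional_monotone (n m k : ℕ) (hk1 : 1 ≤ k) (hkn : k ≤ n - 1)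
    (A : Fin m → Finset (Fin n)) (hA : Function.Injective A)
    (hAcard : ∀ j, (A j).card = k)
    (W : (Fin n → Bool) → ℝ)
    (hW : ∀ b, W b = ∏ i : Fin n,
      (if b i then (1 : ℝ) / (i + 1) else 1 - 1 / (i + 1)))
    (Z : ℕ → ℝ)
    (hZ : ∀ l, Z l = ∑ b ∈ Finset.univ.filter
      (fun b : Fin n → Bool => (Finset.univ.filter (fun i => b i = true)).card = l), W b)
    (U : ℕ → ℝ)
    (hU : ∀ l, U l = ∑ b ∈ Finset.univ.filter
      (fun b : Fin n → Bool =>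
        (Finset.univ.filter (fun i => b i = true)).card = l ∧
        ∃ j : Fin m, ∀ i ∈ A j, b i = true), W b) :
    U k / Z k ≤ U (k + 1) / Z (k + 1) := by
  classical
  have hn : 1 ≤ k ∧ k + 1 ≤ n := by omega
  obtain ⟨-, hk1n⟩ := hn
  set w : Fin n → ℝ := fun i => (i : ℝ) with hwdef
  have hw0 : ∀ i : Fin n, 0 ≤ w i := fun i => by
    simp only [hwdef]; positivity
  set C : ℝ := ∏ i : Fin n, (1:ℝ)/((i:ℝ)+1) with hC
  have hCpos : 0 < C := Finset.prod_pos fun i _ => by positivity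
  have hWeq : ∀ b : Fin n → Bool, W b = C * gg w (univ.filter fun i => b i = true) := by
    intro b
    rw [hW]
    have hstep : ∀ i : Fin n, (if b i then (1:ℝ)/((i:ℝ)+1) else 1 - 1/((i:ℝ)+1))
        = (1/((i:ℝ)+1)) * (if b i then 1 else w i) := by
      intro i
      have h1 : ((i:ℝ)+1) ≠ 0 := by positivity
      cases hb : b i
      · simp only [if_neg, Bool.false_eq_true, if_false, hwdef]
        field_simp
        ring
      · simp
    rw [Finset.prod_congr rfl fun i _ => hstep i, Finset.prod_mul_distrib]
    congr 1
    unfold gg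
    rw [← Finset.filter_not, Finset.prod_filter]
    exact Finset.prod_congr rfl fun i _ => by cases hb : b i <;> simp [hb]
  -- transfers
  have hZ' : ∀ l, Z l = C * ∑ S ∈ univ.filter (fun S : Finset (Fin n) => S.card = l), gg w S := by
    intro l
    rw [hZ]
    exact sum_transfer w (fun S => S.card = l) W C hWeq
  have hU' : ∀ l, U l = C * ∑ S ∈ univ.filter
      (fun S : Finset (Fin n) => S.card = l ∧ ∃ j, A j ⊆ S), gg w S := by
    intro l
    rw [hU]
    have hfil : Finset.univ.filter (fun b : Fin n → Bool =>
          (Finset.univ.filter (fun i => b i = true)).card = l ∧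
          ∃ j : Fin m, ∀ i ∈ A j, b i = true)
        = Finset.univ.filter (fun b : Fin n → Bool =>
          (fun S : Finset (Fin n) => S.card = l ∧ ∃ j, A j ⊆ S)
            (Finset.univ.filter (fun i => b i = true))) := by
      ext b
      simp only [Finset.subset_iff, Finset.mem_filter, Finset.mem_univ, true_and]
    rw [hfil]
    exact sum_transfer w (fun S => S.card = l ∧ ∃ j, A j ⊆ S) W C hWeq
  -- positivity of Z-sums
  have hZSpos : ∀ l, 1 ≤ l → l ≤ n →
      0 < ∑ S ∈ univ.filter (fun S : Finset (Fin n) => S.card = l), gg w S := by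
    intro l hl1 hln
    set S₀ : Finset (Fin n) := Finset.univ.map (Fin.castLEEmb hln) with hS₀
    have hS₀card : S₀.card = l := by
      rw [hS₀, Finset.card_map, Finset.card_univ, Fintype.card_fin]
    have hS₀mem : S₀ ∈ univ.filter (fun S : Finset (Fin n) => S.card = l) := by
      simp [hS₀card]
    have hS₀pos : 0 < gg w S₀ := by
      apply Finset.prod_pos
      intro i hi
      rw [Finset.mem_sdiff] at hi
      have hge : l ≤ (i : ℕ) := by
        by_contra hlt
        push_neg at hlt
        exact hi.2 (by
          rw [hS₀, Finset.mem_map]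
          exact ⟨⟨(i : ℕ), hlt⟩, Finset.mem_univ _, by
            simp [Fin.castLEEmb, Fin.castLE, Fin.ext_iff]⟩)
      have : 0 < (i : ℕ) := by omega
      simp only [hwdef]
      exact_mod_cast this
    calc (0:ℝ) < gg w S₀ := hS₀pos
      _ ≤ _ := Finset.single_le_sum (fun S _ => gg_nonneg hw0 S) hS₀mem
  have hZkpos : 0 < Z k := by
    rw [hZ' k]; exact mul_pos hCpos (hZSpos k hk1 (by omega))
  have hZk1pos : 0 < Z (k+1) := by
    rw [hZ' (k+1)]; exact mul_pos hCpos (hZSpos (k+1) (by omega) hk1n)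
  rw [div_le_div_iff₀ hZkpos hZk1pos]
  rw [hU' k, hU' (k+1), hZ' k, hZ' (k+1)]
  -- core inequality
  have h𝒜 : ∀ S ∈ univ.filter (fun S : Finset (Fin n) => S.card = k ∧ ∃ j, A j ⊆ S),
      S.card = k := fun S hS => (Finset.mem_filter.mp hS).2.1
  have h𝒰 : ∀ T : Finset (Fin n), T.card = k + 1 →
      (∃ S ∈ univ.filter (fun S : Finset (Fin n) => S.card = k ∧ ∃ j, A j ⊆ S), S ⊆ T) →
      T ∈ univ.filter (fun S : Finset (Fin n) => S.card = k + 1 ∧ ∃ j, A j ⊆ S) := by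
    rintro T hc ⟨S, hS, hST⟩
    obtain ⟨j, hj⟩ := (Finset.mem_filter.mp hS).2.2
    exact Finset.mem_filter.mpr ⟨Finset.mem_univ _, hc, j, hj.trans hST⟩
  have h2 := core w hw0 k
    (univ.filter (fun S : Finset (Fin n) => S.card = k ∧ ∃ j, A j ⊆ S)) h𝒜
    (univ.filter (fun S : Finset (Fin n) => S.card = k + 1 ∧ ∃ j, A j ⊆ S)) h𝒰
  calc C * (∑ S ∈ univ.filter (fun S : Finset (Fin n) => S.card = k ∧ ∃ j, A j ⊆ S), gg w S)
        * (C * ∑ S ∈ univ.filter (fun S : Finset (Fin n) => S.card = k + 1), gg w S)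
      = (C * C) * ((∑ S ∈ univ.filter (fun S : Finset (Fin n) => S.card = k ∧ ∃ j, A j ⊆ S), gg w S)
        * (∑ S ∈ univ.filter (fun S : Finset (Fin n) => S.card = k + 1), gg w S)) := by ring
    _ ≤ (C * C) * ((∑ T ∈ univ.filter (fun T : Finset (Fin n) => T.card = k + 1 ∧ ∃ j, A j ⊆ T),
          gg w T) * (∑ S ∈ univ.filter (fun S : Finset (Fin n) => S.card = k), gg w S)) := by
        refine mul_le_mul_of_nonneg_left ?_ (by positivity)
        exact h2
    _ = C * (∑ T ∈ univ.filter (fun T : Finset (Fin n) => T.card = k + 1 ∧ ∃ j, A j ⊆ T), gg w T)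
        * (C * ∑ S ∈ univ.filter (fun S : Finset (Fin n) => S.card = k), gg w S) := by ring
end

section
/- Let $B_1,\dots,B_n$ be independent Bernoulli random variables with $\Pr[B_i=1]=1/i$. For each $1 \le k \le n$ let $\mu_k$ be the law of $(B_1,\dots,B_n)$ conditioned on $\sum_{i=1}^n B_i = k$. Then there exists a coupling of random vectors $B^1,\dots,B^n$ in $\{0,1\}^n$ such that $B^k$ has law $\mu_k$ for each $k$, and almost surely $B^{k+1}$ dominates $B^k$ coordinatewise for every $1 \le k \le n-1$. -/
open Finset

namespace MC

def cardb {m : ℕ} (b : Fin m → Bool) : ℕ := (Finset.univ.filter (fun i => b i = true)).card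

def Wg {m : ℕ} (p : Fin m → ℝ) (b : Fin m → Bool) : ℝ := ∏ i, (if b i then p i else 1 - p i)

def Zg {m : ℕ} (p : Fin m → ℝ) (l : ℕ) : ℝ :=
  ∑ b ∈ Finset.univ.filter (fun b : Fin m → Bool => cardb b = l), Wg p b

lemma Wg_nonneg {m} {p : Fin m → ℝ} (h0 : ∀ i, 0 ≤ p i) (h1 : ∀ i, p i ≤ 1) (b) : 0 ≤ Wg p b :=
  Finset.prod_nonneg fun i _ => by by_cases h : b i <;> simp [h] <;> linarith [h0 i, h1 i]

lemma Wg_pos {m} {p : Fin m → ℝ} (h0 : ∀ i, 0 < p i) (h1 : ∀ i, p i < 1) (b) : 0 < Wg p b :=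
  Finset.prod_pos fun i _ => by by_cases h : b i <;> simp [h] <;> linarith [h0 i, h1 i]

lemma Zg_nonneg {m} {p : Fin m → ℝ} (h0 : ∀ i, 0 ≤ p i) (h1 : ∀ i, p i ≤ 1) (l) : 0 ≤ Zg p l :=
  Finset.sum_nonneg fun b _ => Wg_nonneg h0 h1 b

lemma cardb_le {m} (b : Fin m → Bool) : cardb b ≤ m :=
  le_trans (Finset.card_filter_le _ _) (by simp)

lemma Zg_eq_zero {m} {p : Fin m → ℝ} {l : ℕ} (h : m < l) : Zg p l = 0 := by
  rw [Zg, Finset.filter_false_of_mem, Finset.sum_empty]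
  intro b _
  have := cardb_le b
  omega

lemma cardb_cons {m} (ε : Bool) (b : Fin m → Bool) :
    cardb (Fin.cons ε b) = (if ε then 1 else 0) + cardb b := by
  simp only [cardb, Finset.card_filter]
  rw [Fin.sum_univ_succ]
  simp

lemma cardb_cons_true {m} (b : Fin m → Bool) :
    cardb (Fin.cons true b) = cardb b + 1 := by rw [cardb_cons]; simp; omega

lemma cardb_cons_false {m} (b : Fin m → Bool) :
    cardb (Fin.cons false b) = cardb b := by rw [cardb_cons]; simp

lemma Wg_cons {m} (p : Fin (m+1) → ℝ) (ε : Bool) (b : Fin m → Bool) :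
    Wg p (Fin.cons ε b) = (if ε then p 0 else 1 - p 0) * Wg (p ∘ Fin.succ) b := by
  rw [Wg, Fin.prod_univ_succ]
  simp [Wg, Function.comp]

lemma Wg_cons_true {m} (p : Fin (m+1) → ℝ) (b : Fin m → Bool) :
    Wg p (Fin.cons true b) = p 0 * Wg (p ∘ Fin.succ) b := by rw [Wg_cons]; simp

lemma Wg_cons_false {m} (p : Fin (m+1) → ℝ) (b : Fin m → Bool) :
    Wg p (Fin.cons false b) = (1 - p 0) * Wg (p ∘ Fin.succ) b := by rw [Wg_cons]; simp

lemma sum_split {m} (f : (Fin (m+1) → Bool) → ℝ) :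
    ∑ b, f b = ∑ ε : Bool, ∑ b' : Fin m → Bool, f (Fin.cons ε b') := by
  calc ∑ b, f b = ∑ x : Bool × (Fin m → Bool), f (Fin.cons x.1 x.2) :=
        (Fintype.sum_equiv (Fin.consEquiv (fun _ => Bool)) _ _ (fun x => rfl)).symm
    _ = ∑ ε : Bool, ∑ b' : Fin m → Bool, f (Fin.cons ε b') := Fintype.sum_prod_type _

lemma Zg_zero {m} (p : Fin (m+1) → ℝ) : Zg p 0 = (1 - p 0) * Zg (p ∘ Fin.succ) 0 := by
  rw [Zg, Finset.sum_filter, sum_split, Fintype.sum_bool]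
  have h1 : ∀ b' : Fin m → Bool,
      (if cardb (Fin.cons true b') = 0 then Wg p (Fin.cons true b') else 0) = 0 := by
    intro b'; rw [cardb_cons_true]; simp
  have h2 : ∀ b' : Fin m → Bool,
      (if cardb (Fin.cons false b') = 0 then Wg p (Fin.cons false b') else 0)
        = (1 - p 0) * (if cardb b' = 0 then Wg (p ∘ Fin.succ) b' else 0) := by
    intro b'; rw [cardb_cons_false, Wg_cons_false]
    by_cases h : cardb b' = 0 <;> simp [h]
  rw [Finset.sum_congr rfl (fun b' _ => h1 b'), Finset.sum_congr rfl (fun b' _ => h2 b')]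
  rw [← Finset.mul_sum, Zg, Finset.sum_filter]
  simp

lemma Zg_succ {m} (p : Fin (m+1) → ℝ) (l : ℕ) :
    Zg p (l+1) = (1 - p 0) * Zg (p ∘ Fin.succ) (l+1) + p 0 * Zg (p ∘ Fin.succ) l := by
  rw [Zg, Finset.sum_filter, sum_split, Fintype.sum_bool]
  have h1 : ∀ b' : Fin m → Bool,
      (if cardb (Fin.cons true b') = l + 1 then Wg p (Fin.cons true b') else 0)
        = p 0 * (if cardb b' = l then Wg (p ∘ Fin.succ) b' else 0) := by
    intro b'; rw [cardb_cons_true, Wg_cons_true]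
    by_cases h : cardb b' = l
    · rw [if_pos (by omega), if_pos h]
    · rw [if_neg (by omega), if_neg h, mul_zero]
  have h2 : ∀ b' : Fin m → Bool,
      (if cardb (Fin.cons false b') = l + 1 then Wg p (Fin.cons false b') else 0)
        = (1 - p 0) * (if cardb b' = l + 1 then Wg (p ∘ Fin.succ) b' else 0) := by
    intro b'; rw [cardb_cons_false, Wg_cons_false]
    by_cases h : cardb b' = l + 1
    · rw [if_pos (by omega), if_pos h]
    · rw [if_neg (by omega), if_neg h, mul_zero]
  rw [Finset.sum_congr rfl (fun b' _ => h1 b'), Finset.sum_congr rfl (fun b' _ => h2 b')]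
  rw [← Finset.mul_sum, ← Finset.mul_sum, Zg, Zg, Finset.sum_filter, Finset.sum_filter]
  ring

lemma Zg_fin0_zero (p : Fin 0 → ℝ) : Zg p 0 = 1 := by
  rw [Zg]
  have h : (Finset.univ.filter (fun b : Fin 0 → Bool => cardb b = 0)) = Finset.univ := by
    apply Finset.filter_true_of_mem
    intro b _
    have := cardb_le b
    omega
  rw [h]
  rw [show (Finset.univ : Finset (Fin 0 → Bool)) = {fun i => i.elim0} from by
    apply Finset.eq_of_subset_of_card_le (by intro x _; simp; exact funext fun i => i.elim0)
    simp [Finset.card_univ]]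
  rw [Finset.sum_singleton, Wg]
  simp

lemma Zg_pos : ∀ (m : ℕ) (p : Fin m → ℝ), (∀ i, 0 < p i) → (∀ i, p i < 1) →
    ∀ l, l ≤ m → 0 < Zg p l := by
  intro m
  induction m with
  | zero =>
    intro p _ _ l hl
    have : l = 0 := by omega
    rw [this, Zg_fin0_zero]; norm_num
  | succ m ih =>
    intro p h0 h1 l hl
    have h0' : ∀ i, 0 < (p ∘ Fin.succ) i := fun i => h0 _
    have h1' : ∀ i, (p ∘ Fin.succ) i < 1 := fun i => h1 _
    have hq0 : 0 < p 0 := h0 0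
    have hq1 : p 0 < 1 := h1 0
    cases l with
    | zero =>
      rw [Zg_zero]
      exact mul_pos (by linarith) (ih _ h0' h1' 0 (by omega))
    | succ l =>
      rw [Zg_succ]
      have t2 : 0 < p 0 * Zg (p ∘ Fin.succ) l := mul_pos hq0 (ih _ h0' h1' l (by omega))
      have t1 : 0 ≤ (1 - p 0) * Zg (p ∘ Fin.succ) (l+1) :=
        mul_nonneg (by linarith) (Zg_nonneg (fun i => (h0' i).le) (fun i => (h1' i).le) _)
      linarith

lemma LC : ∀ (m : ℕ) (p : Fin m → ℝ), (∀ i, 0 ≤ p i) → (∀ i, p i ≤ 1) →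
    ∀ k l, k ≤ l → Zg p k * Zg p (l+1) ≤ Zg p (k+1) * Zg p l := by
  intro m
  induction m with
  | zero =>
    intro p h0 h1 k l _
    rw [Zg_eq_zero (show (0:ℕ) < l + 1 by omega), mul_zero]
    exact mul_nonneg (Zg_nonneg h0 h1 _) (Zg_nonneg h0 h1 _)
  | succ m ih =>
    intro p h0 h1 k l hkl
    have h0' : ∀ i, 0 ≤ (p ∘ Fin.succ) i := fun i => h0 _
    have h1' : ∀ i, (p ∘ Fin.succ) i ≤ 1 := fun i => h1 _
    have ha : 0 ≤ 1 - p 0 := by linarith [h1 0]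
    have hc : 0 ≤ p 0 := h0 0
    have hZn : ∀ j, 0 ≤ Zg (p ∘ Fin.succ) j := fun j => Zg_nonneg h0' h1' j
    cases k with
    | zero =>
      cases l with
      | zero => rw [mul_comm]
      | succ l' =>
        have i1 := ih _ h0' h1' 0 (l'+1) (by omega)
        rw [Zg_zero, show l' + 1 + 1 = (l'+1)+1 from rfl, Zg_succ, Zg_succ,
          show (0:ℕ)+1 = 0+1 from rfl, Zg_succ]
        nlinarith [mul_nonneg (mul_nonneg ha hc) (mul_nonneg (hZn (0+1)) (hZn l')),
          mul_nonneg (mul_nonneg hc hc) (mul_nonneg (hZn 0) (hZn l')),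
          mul_le_mul_of_nonneg_left i1 (mul_nonneg ha ha)]
    | succ k' =>
      cases l with
      | zero => omega
      | succ l' =>
        have hkl' : k' ≤ l' := by omega
        have i1 := ih _ h0' h1' (k'+1) (l'+1) (by omega)
        have i2 := ih _ h0' h1' k' l' hkl'
        have i3 : Zg (p ∘ Fin.succ) k' * Zg (p ∘ Fin.succ) (l'+1+1) ≤
            Zg (p ∘ Fin.succ) (k'+1+1) * Zg (p ∘ Fin.succ) l' := by
          rcases Nat.eq_or_lt_of_le hkl' with h | h
          · subst h; rw [mul_comm]
          · have j1 := ih _ h0' h1' k' (l'+1) (by omega)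
            have j2 := ih _ h0' h1' (k'+1) l' (by omega)
            calc Zg (p ∘ Fin.succ) k' * Zg (p ∘ Fin.succ) (l'+1+1)
                ≤ Zg (p ∘ Fin.succ) (k'+1) * Zg (p ∘ Fin.succ) (l'+1) := j1
              _ ≤ Zg (p ∘ Fin.succ) (k'+1+1) * Zg (p ∘ Fin.succ) l' := j2
        rw [show k' + 1 + 1 = (k'+1)+1 from rfl, show l' + 1 + 1 = (l'+1)+1 from rfl,
          Zg_succ p (k'+1), Zg_succ p (l'+1), Zg_succ p k', Zg_succ p l']
        nlinarith [mul_le_mul_of_nonneg_left i1 (mul_nonneg ha ha),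
          mul_le_mul_of_nonneg_left i2 (mul_nonneg hc hc),
          mul_le_mul_of_nonneg_left i3 (mul_nonneg ha hc)]

lemma tele_ge (f : ℕ → ℝ) : ∀ (N : ℕ) (K : ℕ), K ≤ N →
    ∑ t ∈ Finset.range N, (if K ≤ t then f t - f (t+1) else 0) = f K - f N := by
  intro N
  induction N with
  | zero =>
    intro K hK
    obtain rfl : K = 0 := by omega
    rw [Finset.range_zero, Finset.sum_empty, sub_self]
  | succ N ihN =>
    intro K hK
    rw [Finset.sum_range_succ]
    by_cases h : K ≤ N
    · rw [ihN K h, if_pos h]; ring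
    · have hK' : K = N + 1 := by omega
      subst hK'
      rw [if_neg h, Finset.sum_eq_zero (fun t ht => by
        rw [if_neg (by simp at ht; omega)])]
      simp

lemma tele_lt (f : ℕ → ℝ) : ∀ (N : ℕ) (K : ℕ), K ≤ N →
    ∑ t ∈ Finset.range N, (if t < K then f t - f (t+1) else 0) = f 0 - f K := by
  intro N
  induction N with
  | zero =>
    intro K hK
    obtain rfl : K = 0 := by omega
    rw [Finset.range_zero, Finset.sum_empty, sub_self]
  | succ N ihN =>
    intro K hK
    rw [Finset.sum_range_succ]
    by_cases h : K ≤ N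
    · rw [ihN K h, if_neg (by omega)]; ring
    · have hK' : K = N + 1 := by omega
      subst hK'
      rw [if_pos (by omega),
        Finset.sum_congr rfl (fun x hx => if_pos (by simp only [Finset.mem_range] at hx; omega)),
        Finset.sum_range_sub' f]
      ring

noncomputable def lamd {m : ℕ} (p : Fin (m+1) → ℝ) (j : ℕ) : ℝ := (1 - p 0) * Zg (p ∘ Fin.succ) j / Zg p j

noncomputable def wd {m : ℕ} (p : Fin (m+1) → ℝ) (t : Fin (m+1)) : ℝ := lamd p t - lamd p (t+1)

def idxd {m : ℕ} (t : Fin (m+1)) (k : Fin (m+2)) : Fin (m+1) :=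
  if h : (k:ℕ) ≤ (t:ℕ) then ⟨k, lt_of_le_of_lt h t.isLt⟩
  else ⟨(k:ℕ)-1, by have := k.isLt; omega⟩

def Phid {m : ℕ} (ω' : Fin (m+1) → Fin m → Bool) (t : Fin (m+1)) :
    Fin (m+2) → Fin (m+1) → Bool :=
  fun k => Fin.cons (decide ((t:ℕ) < (k:ℕ))) (ω' (idxd t k))

lemma idxd_le {m : ℕ} {t : Fin (m+1)} {k : Fin (m+2)} (h : (k:ℕ) ≤ (t:ℕ)) :
    ((idxd t k : Fin (m+1)) : ℕ) = (k:ℕ) := by rw [idxd, dif_pos h]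

lemma idxd_gt {m : ℕ} {t : Fin (m+1)} {k : Fin (m+2)} (h : (t:ℕ) < (k:ℕ)) :
    ((idxd t k : Fin (m+1)) : ℕ) = (k:ℕ) - 1 := by rw [idxd, dif_neg (by omega)]

lemma cons_eq_iff {m : ℕ} {x : Bool} {u : Fin m → Bool} {b : Fin (m+1) → Bool} :
    Fin.cons x u = b ↔ (x = b 0 ∧ u = Fin.tail b) := by
  constructor
  · rintro rfl
    exact ⟨by simp, by simp⟩
  · rintro ⟨rfl, rfl⟩
    exact Fin.cons_self_tail b

lemma sum_push {ι κ : Type*} [Fintype ι] [Fintype κ] [DecidableEq κ]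
    (f : ι → ℝ) (G : ι → κ) (P : κ → Prop) [DecidablePred P] :
    ∑ ω ∈ Finset.univ.filter P, (∑ x, if G x = ω then f x else 0)
      = ∑ x, if P (G x) then f x else 0 := by
  rw [Finset.sum_comm]
  refine Finset.sum_congr rfl fun x _ => ?_
  rw [Finset.sum_ite_eq (Finset.univ.filter P) (G x) (fun _ => f x)]
  simp [Finset.mem_filter]

lemma sum_ite_pull {ι : Type*} [Fintype ι] (A : Prop) [Decidable A] (X : ι → ℝ) :
    ∑ x, (if A then X x else 0) = if A then (∑ x, X x) else 0 := by
  split <;> simp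

section
variable {m : ℕ} {p : Fin (m+1) → ℝ}

lemma lamd_zero (h0 : ∀ i, 0 < p i) (h1 : ∀ i, p i < 1) : lamd p 0 = 1 := by
  rw [lamd, Zg_zero]
  have h2 : 0 < (1 - p 0) * Zg (p ∘ Fin.succ) 0 := by
    rw [← Zg_zero]; exact Zg_pos _ p h0 h1 0 (by omega)
  exact div_self (ne_of_gt h2)

lemma lamd_top : lamd p (m+1) = 0 := by
  rw [lamd, Zg_eq_zero (lt_add_one m), mul_zero, zero_div]

lemma wd_nonneg (h0 : ∀ i, 0 < p i) (h1 : ∀ i, p i < 1) (t : Fin (m+1)) : 0 ≤ wd p t := by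
  have h0' : ∀ i, 0 ≤ (p ∘ Fin.succ) i := fun i => (h0 _).le
  have h1' : ∀ i, (p ∘ Fin.succ) i ≤ 1 := fun i => (h1 _).le
  have hq0 := h0 0
  have hq1 := h1 0
  have hZ1 : 0 < Zg p (t:ℕ) := Zg_pos _ p h0 h1 _ (by omega)
  have hZ2 : 0 < Zg p ((t:ℕ)+1) := Zg_pos _ p h0 h1 _ (by have := t.isLt; omega)
  rw [wd, sub_nonneg, lamd, lamd, div_le_div_iff₀ hZ2 hZ1]
  have key : Zg (p ∘ Fin.succ) ((t:ℕ)+1) * Zg p (t:ℕ)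
      ≤ Zg (p ∘ Fin.succ) (t:ℕ) * Zg p ((t:ℕ)+1) := by
    cases hT : (t:ℕ) with
    | zero =>
      rw [Zg_zero p, Zg_succ p 0]
      nlinarith [mul_nonneg hq0.le (mul_nonneg (Zg_nonneg h0' h1' 0) (Zg_nonneg h0' h1' 0))]
    | succ T =>
      rw [Zg_succ p T, Zg_succ p (T+1)]
      have lc := LC m (p ∘ Fin.succ) h0' h1' T (T+1) (Nat.le_succ T)
      nlinarith [mul_le_mul_of_nonneg_left lc hq0.le]
  nlinarith [mul_le_mul_of_nonneg_left key (by linarith : (0:ℝ) ≤ 1 - p 0)]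

lemma sum_wd_ge (K : ℕ) (hK : K ≤ m+1) :
    ∑ t : Fin (m+1), (if K ≤ (t:ℕ) then wd p t else 0) = lamd p K := by
  have e : ∀ t : Fin (m+1), (if K ≤ (t:ℕ) then wd p t else 0)
      = (fun j => if K ≤ j then lamd p j - lamd p (j+1) else 0) (t:ℕ) := fun t => rfl
  rw [Finset.sum_congr rfl (fun t _ => e t),
    Fin.sum_univ_eq_sum_range (fun j => if K ≤ j then lamd p j - lamd p (j+1) else 0) (m+1),
    tele_ge _ _ K hK, lamd_top]
  ring

lemma sum_wd_lt (h0 : ∀ i, 0 < p i) (h1 : ∀ i, p i < 1) (K : ℕ) (hK : K ≤ m+1) :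
    ∑ t : Fin (m+1), (if (t:ℕ) < K then wd p t else 0) = 1 - lamd p K := by
  have e : ∀ t : Fin (m+1), (if (t:ℕ) < K then wd p t else 0)
      = (fun j => if j < K then lamd p j - lamd p (j+1) else 0) (t:ℕ) := fun t => rfl
  rw [Finset.sum_congr rfl (fun t _ => e t),
    Fin.sum_univ_eq_sum_range (fun j => if j < K then lamd p j - lamd p (j+1) else 0) (m+1),
    tele_lt _ _ K hK, lamd_zero h0 h1]

lemma one_sub_lamd (h0 : ∀ i, 0 < p i) (h1 : ∀ i, p i < 1) (K : ℕ) (hK : K + 1 ≤ m+1) :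
    1 - lamd p (K+1) = p 0 * Zg (p ∘ Fin.succ) K / Zg p (K+1) := by
  have hZ : 0 < Zg p (K+1) := Zg_pos _ p h0 h1 _ hK
  rw [lamd, eq_div_iff (ne_of_gt hZ), sub_mul, div_mul_cancel₀ _ (ne_of_gt hZ), Zg_succ]
  ring

end

lemma Phid_apply {m : ℕ} (ω' : Fin (m+1) → Fin m → Bool) (t : Fin (m+1)) (k : Fin (m+2)) :
    Phid ω' t k = Fin.cons (decide ((t:ℕ) < (k:ℕ))) (ω' (idxd t k)) := rfl

lemma cardb_split {m : ℕ} (b : Fin (m+1) → Bool) :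
    cardb b = (if b 0 then 1 else 0) + cardb (Fin.tail b) := by
  conv_lhs => rw [← Fin.cons_self_tail b]
  rw [cardb_cons]

lemma Wg_split {m : ℕ} (p : Fin (m+1) → ℝ) (b : Fin (m+1) → Bool) :
    Wg p b = (if b 0 then p 0 else 1 - p 0) * Wg (p ∘ Fin.succ) (Fin.tail b) := by
  conv_lhs => rw [← Fin.cons_self_tail b]
  rw [Wg_cons]

theorem aux : ∀ (m : ℕ) (p : Fin m → ℝ), (∀ i, 0 < p i) → (∀ i, p i < 1) →
    ∃ ν : (Fin (m+1) → Fin m → Bool) → ℝ,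
      (∀ ω, 0 ≤ ν ω) ∧ (∑ ω, ν ω = 1) ∧
      (∀ (k : Fin (m+1)) (b : Fin m → Bool),
        ∑ ω ∈ Finset.univ.filter (fun ω : Fin (m+1) → Fin m → Bool => ω k = b), ν ω =
          if cardb b = (k:ℕ) then Wg p b / Zg p (k:ℕ) else 0) ∧
      (∀ ω, 0 < ν ω → ∀ k l : Fin (m+1), (l:ℕ) = (k:ℕ) + 1 →
        ∀ i, ω k i = true → ω l i = true) := by
  intro m
  induction m with
  | zero =>
    intro p _ _
    have hcard1 : Fintype.card (Fin 1 → Fin 0 → Bool) = 1 := by simp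
    refine ⟨fun _ => 1, fun _ => zero_le_one, ?_, ?_, ?_⟩
    · rw [Finset.sum_const, Finset.card_univ, hcard1, one_smul]
    · intro k b
      have hfilter : (Finset.univ.filter (fun ω : Fin 1 → Fin 0 → Bool => ω k = b))
          = Finset.univ := by
        apply Finset.filter_true_of_mem
        intro ω _
        exact funext fun i => i.elim0
      have hb : cardb b = 0 := by simp [cardb]
      have hk : (k:ℕ) = 0 := by omega
      have hW : Wg p b = 1 := by simp [Wg]
      rw [hfilter, Finset.sum_const, Finset.card_univ, hcard1, one_smul, hb, hk,
        if_pos rfl, hW, Zg_fin0_zero]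
      norm_num
    · intro ω _ k l hkl i
      have hk := k.isLt
      have hl := l.isLt
      omega
  | succ m ih =>
    intro p h0 h1
    have h0' : ∀ i, 0 < (p ∘ Fin.succ) i := fun i => h0 _
    have h1' : ∀ i, (p ∘ Fin.succ) i < 1 := fun i => h1 _
    obtain ⟨ν', hnn', hsum', hmarg', hmono'⟩ := ih (p ∘ Fin.succ) h0' h1'
    refine ⟨fun ω => ∑ x : (Fin (m+1) → Fin m → Bool) × Fin (m+1),
        (if Phid x.1 x.2 = ω then ν' x.1 * wd p x.2 else 0), ?_, ?_, ?_, ?_⟩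
    · intro ω
      apply Finset.sum_nonneg
      intro x _
      split
      · exact mul_nonneg (hnn' x.1) (wd_nonneg h0 h1 x.2)
      · exact le_refl 0
    · rw [Finset.sum_comm]
      have h1x : ∀ x : (Fin (m+1) → Fin m → Bool) × Fin (m+1),
          (∑ ω : Fin (m+2) → Fin (m+1) → Bool,
            if Phid x.1 x.2 = ω then ν' x.1 * wd p x.2 else 0) = ν' x.1 * wd p x.2 := by
        intro x
        rw [Finset.sum_ite_eq Finset.univ (Phid x.1 x.2) (fun _ => ν' x.1 * wd p x.2)]
        simp
      rw [Finset.sum_congr rfl (fun x _ => h1x x), Fintype.sum_prod_type]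
      have hw : ∑ t : Fin (m+1), wd p t = 1 := by
        have h := sum_wd_ge (p := p) 0 (by omega)
        simp only [Nat.zero_le, if_true] at h
        rw [h, lamd_zero h0 h1]
      calc ∑ ω', ∑ t, ν' ω' * wd p t = ∑ ω' : Fin (m+1) → Fin m → Bool, ν' ω' * ∑ t, wd p t :=
            Finset.sum_congr rfl fun ω' _ => (Finset.mul_sum _ _ _).symm
        _ = 1 := by rw [hw]; simpa using hsum'
    · intro k b
      refine (sum_push (fun x : (Fin (m+1) → Fin m → Bool) × Fin (m+1) => ν' x.1 * wd p x.2)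
        (fun x => Phid x.1 x.2) (fun ω : Fin (m+2) → Fin (m+1) → Bool => ω k = b)).trans ?_
      rw [Fintype.sum_prod_type, Finset.sum_comm]
      have step : ∀ t : Fin (m+1),
          (∑ ω' : Fin (m+1) → Fin m → Bool,
            if Phid ω' t k = b then ν' ω' * wd p t else 0)
          = if decide ((t:ℕ) < (k:ℕ)) = b 0 then
              (if cardb (Fin.tail b) = ((idxd t k : Fin (m+1)) : ℕ) then
                Wg (p ∘ Fin.succ) (Fin.tail b) / Zg (p ∘ Fin.succ) ((idxd t k : Fin (m+1)) : ℕ)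
              else 0) * wd p t
            else 0 := by
        intro t
        by_cases hA : decide ((t:ℕ) < (k:ℕ)) = b 0
        · rw [if_pos hA]
          have hterm : ∀ ω' : Fin (m+1) → Fin m → Bool,
              (if Phid ω' t k = b then ν' ω' * wd p t else 0)
              = (if ω' (idxd t k) = Fin.tail b then ν' ω' else 0) * wd p t := by
            intro ω'
            have hPB : (Phid ω' t k = b) ↔ (ω' (idxd t k) = Fin.tail b) := by
              rw [Phid_apply, cons_eq_iff]
              simp [hA]
            by_cases hB : ω' (idxd t k) = Fin.tail b
            · rw [if_pos (hPB.mpr hB), if_pos hB]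
            · rw [if_neg (fun hc => hB (hPB.mp hc)), if_neg hB, zero_mul]
          rw [Finset.sum_congr rfl (fun ω' _ => hterm ω'), ← Finset.sum_mul,
            ← Finset.sum_filter, hmarg']
        · rw [if_neg hA, Finset.sum_eq_zero]
          intro ω' _
          rw [Phid_apply]
          exact if_neg (fun hc => hA (cons_eq_iff.mp hc).1)
      rw [Finset.sum_congr rfl (fun t _ => step t)]
      cases hb0 : b 0 with
      | false =>
        have e1 : ∀ t : Fin (m+1),
            (if decide ((t:ℕ) < (k:ℕ)) = false then
              (if cardb (Fin.tail b) = ((idxd t k : Fin (m+1)) : ℕ) then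
                Wg (p ∘ Fin.succ) (Fin.tail b) / Zg (p ∘ Fin.succ) ((idxd t k : Fin (m+1)) : ℕ)
              else 0) * wd p t
            else 0)
            = (if cardb (Fin.tail b) = (k:ℕ) then
                Wg (p ∘ Fin.succ) (Fin.tail b) / Zg (p ∘ Fin.succ) (k:ℕ) else 0)
              * (if (k:ℕ) ≤ (t:ℕ) then wd p t else 0) := by
          intro t
          by_cases h : (k:ℕ) ≤ (t:ℕ)
          · have hd : decide ((t:ℕ) < (k:ℕ)) = false := decide_eq_false (by omega)
            rw [if_pos hd, if_pos h, idxd_le h]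
          · have hd : ¬(decide ((t:ℕ) < (k:ℕ)) = false) := by simp; omega
            rw [if_neg hd, if_neg h, mul_zero]
        rw [Finset.sum_congr rfl (fun t _ => e1 t), ← Finset.mul_sum,
          sum_wd_ge (k:ℕ) (by have := k.isLt; omega)]
        rw [cardb_split b, Wg_split p b]
        simp only [hb0, Bool.false_eq_true, if_false, Nat.zero_add]
        by_cases hcb : cardb (Fin.tail b) = (k:ℕ)
        · rw [if_pos hcb, if_pos hcb]
          have hZ'pos : 0 < Zg (p ∘ Fin.succ) (k:ℕ) :=
            Zg_pos _ _ h0' h1' _ (by rw [← hcb]; exact cardb_le _)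
          have hZpos : 0 < Zg p (k:ℕ) := Zg_pos _ p h0 h1 _ (by have := k.isLt; omega)
          rw [lamd]
          field_simp
        · rw [if_neg hcb, if_neg hcb, zero_mul]
      | true =>
        have e2 : ∀ t : Fin (m+1),
            (if decide ((t:ℕ) < (k:ℕ)) = true then
              (if cardb (Fin.tail b) = ((idxd t k : Fin (m+1)) : ℕ) then
                Wg (p ∘ Fin.succ) (Fin.tail b) / Zg (p ∘ Fin.succ) ((idxd t k : Fin (m+1)) : ℕ)
              else 0) * wd p t
            else 0)
            = (if cardb (Fin.tail b) = (k:ℕ) - 1 then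
                Wg (p ∘ Fin.succ) (Fin.tail b) / Zg (p ∘ Fin.succ) ((k:ℕ) - 1) else 0)
              * (if (t:ℕ) < (k:ℕ) then wd p t else 0) := by
          intro t
          by_cases h : (t:ℕ) < (k:ℕ)
          · have hd : decide ((t:ℕ) < (k:ℕ)) = true := decide_eq_true h
            rw [if_pos hd, if_pos h, idxd_gt h]
          · have hd : ¬(decide ((t:ℕ) < (k:ℕ)) = true) := by simp; omega
            rw [if_neg hd, if_neg h, mul_zero]
        rw [Finset.sum_congr rfl (fun t _ => e2 t), ← Finset.mul_sum,
          sum_wd_lt h0 h1 (k:ℕ) (by have := k.isLt; omega)]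
        cases hK : (k:ℕ) with
        | zero =>
          rw [lamd_zero h0 h1, sub_self, mul_zero, cardb_split b]
          simp only [hb0, if_true]
          rw [if_neg (by omega)]
        | succ K =>
          simp only [Nat.add_sub_cancel]
          rw [one_sub_lamd h0 h1 K (by have := k.isLt; omega)]
          rw [cardb_split b, Wg_split p b]
          simp only [hb0, if_true]
          by_cases hcb : cardb (Fin.tail b) = K
          · rw [if_pos hcb, if_pos (by omega)]
            have hZ'pos : 0 < Zg (p ∘ Fin.succ) K :=
              Zg_pos _ _ h0' h1' _ (by rw [← hcb]; exact cardb_le _)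
            have hZpos : 0 < Zg p (K+1) := Zg_pos _ p h0 h1 _ (by have := k.isLt; omega)
            field_simp
          · rw [if_neg hcb, if_neg (by omega), zero_mul]
    · intro ω hpos k l hkl i
      obtain ⟨x, _, hx⟩ := Finset.exists_ne_zero_of_sum_ne_zero (ne_of_gt hpos)
      by_cases hP : Phid x.1 x.2 = ω
      swap
      · rw [if_neg hP] at hx; exact absurd rfl hx
      rw [if_pos hP] at hx
      have hνpos : 0 < ν' x.1 :=
        lt_of_le_of_ne (hnn' x.1) (Ne.symm (left_ne_zero_of_mul hx))
      subst hP
      revert i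
      refine Fin.cases ?_ ?_
      · simp only [Phid_apply, Fin.cons_zero, decide_eq_true_eq]
        intro h
        omega
      · intro j
        simp only [Phid_apply, Fin.cons_succ]
        intro hki
        by_cases hc1 : (k:ℕ) ≤ (x.2:ℕ)
        · by_cases hc2 : (l:ℕ) ≤ (x.2:ℕ)
          · refine hmono' x.1 hνpos (idxd x.2 k) (idxd x.2 l) ?_ j hki
            rw [idxd_le hc1, idxd_le hc2, hkl]
          · have he : idxd x.2 l = idxd x.2 k :=
              Fin.ext (by rw [idxd_le hc1, idxd_gt (by omega)]; omega)
            rw [he]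
            exact hki
        · refine hmono' x.1 hνpos (idxd x.2 k) (idxd x.2 l) ?_ j hki
          rw [idxd_gt (by omega), idxd_gt (by omega)]
          omega

def gmap {m : ℕ} (ω' : Fin (m+1) → Fin m → Bool) : Fin (m+1) → Fin (m+1) → Bool :=
  fun k => Fin.cons true (ω' k)

end MC

open MC

/-- Existence of a monotone coupling of the laws of `(B_1,…,B_n)` (independent
Bernoulli with means `1/i`) conditioned on `∑ B_i = k`, for `k = 1,…,n`:
there is a joint law `μ` on sequences `(B^1,…,B^n)` (indexed by `Fin n`, with
`ω ⟨k-1⟩` playing the role of `B^k`) whose `k`-th marginal is the conditional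
law given sum `k`, and which is almost surely coordinatewise increasing in `k`. -/
theorem exists_monotone_coupling_bernoulli_conditioned (n : ℕ)
    (W : (Fin n → Bool) → ℝ)
    (hW : ∀ b, W b = ∏ i : Fin n,
      (if b i then (1 : ℝ) / (i + 1) else 1 - 1 / (i + 1)))
    (Z : ℕ → ℝ)
    (hZ : ∀ l, Z l = ∑ b ∈ Finset.univ.filter
      (fun b : Fin n → Bool => (Finset.univ.filter (fun i => b i = true)).card = l), W b) :
    ∃ μ : (Fin n → Fin n → Bool) → ℝ,
      (∀ ω, 0 ≤ μ ω) ∧ (∑ ω : Fin n → Fin n → Bool, μ ω = 1) ∧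
      (∀ k : Fin n, ∀ b : Fin n → Bool,
        ∑ ω ∈ Finset.univ.filter (fun ω : Fin n → Fin n → Bool => ω k = b), μ ω =
          (if (Finset.univ.filter (fun i => b i = true)).card = (k : ℕ) + 1
            then W b / Z ((k : ℕ) + 1) else 0)) ∧
      (∀ ω : Fin n → Fin n → Bool, 0 < μ ω →
        ∀ k l : Fin n, (l : ℕ) = (k : ℕ) + 1 →
          ∀ i : Fin n, ω k i = true → ω l i = true) := by
  cases n with
  | zero =>
    refine ⟨fun _ => 1, fun _ => zero_le_one, ?_, ?_, ?_⟩
    · have hcard : Fintype.card (Fin 0 → Fin 0 → Bool) = 1 := by simp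
      rw [Finset.sum_const, Finset.card_univ, hcard, one_smul]
    · intro k
      exact k.elim0
    · intro ω _ k
      exact k.elim0
  | succ m =>
    set pf : Fin (m+1) → ℝ := fun i => (1 : ℝ) / (i + 1) with hpfdef
    have hWg : ∀ b, W b = Wg pf b := fun b => hW b
    have hZg : ∀ l, Z l = Zg pf l := by
      intro l
      rw [hZ]
      exact Finset.sum_congr rfl (fun b _ => hWg b)
    have hpf0 : pf 0 = 1 := by
      rw [hpfdef]
      norm_num
    have h0' : ∀ j : Fin m, 0 < (pf ∘ Fin.succ) j := by
      intro j
      have : (0:ℝ) ≤ ((Fin.succ j : Fin (m+1)) : ℕ) := Nat.cast_nonneg _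
      simp only [hpfdef, Function.comp_apply]
      positivity
    have h1' : ∀ j : Fin m, (pf ∘ Fin.succ) j < 1 := by
      intro j
      have hv : ((Fin.succ j : Fin (m+1)) : ℕ) = (j:ℕ) + 1 := Fin.val_succ j
      have hc : (1:ℝ) ≤ ((Fin.succ j : Fin (m+1)) : ℕ) := by
        rw [hv]
        push_cast
        linarith [Nat.cast_nonneg (α := ℝ) (j:ℕ)]
      simp only [hpfdef, Function.comp_apply]
      rw [div_lt_one (by linarith)]
      linarith
    obtain ⟨ν, hnn, hsum, hmarg, hmono⟩ := MC.aux m (pf ∘ Fin.succ) h0' h1'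
    refine ⟨fun ω => ∑ ω' : Fin (m+1) → Fin m → Bool,
        (if gmap ω' = ω then ν ω' else 0), ?_, ?_, ?_, ?_⟩
    · intro ω
      apply Finset.sum_nonneg
      intro ω' _
      split
      · exact hnn ω'
      · exact le_refl 0
    · rw [Finset.sum_comm]
      have h1x : ∀ ω' : Fin (m+1) → Fin m → Bool,
          (∑ ω : Fin (m+1) → Fin (m+1) → Bool,
            if gmap ω' = ω then ν ω' else 0) = ν ω' := by
        intro ω'
        rw [Finset.sum_ite_eq Finset.univ (gmap ω') (fun _ => ν ω')]
        simp
      rw [Finset.sum_congr rfl (fun ω' _ => h1x ω')]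
      exact hsum
    · intro k b
      rw [hWg b, hZg ((k:ℕ)+1)]
      refine (sum_push ν gmap
        (fun ω : Fin (m+1) → Fin (m+1) → Bool => ω k = b)).trans ?_
      have hcons : ∀ ω' : Fin (m+1) → Fin m → Bool,
          (gmap ω' k = b) ↔ (true = b 0 ∧ ω' k = Fin.tail b) :=
        fun ω' => cons_eq_iff
      cases hb0 : b 0 with
      | false =>
        rw [Finset.sum_eq_zero (fun ω' _ => if_neg (fun hc => by
          have := ((hcons ω').mp hc).1
          rw [hb0] at this
          exact Bool.true_eq_false.mp this))]
        have hWb0 : Wg pf b = 0 := by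
          rw [Wg_split pf b, hb0]
          simp [hpf0]
        rw [hWb0, zero_div, ite_self]
      | true =>
        have e : ∀ ω' : Fin (m+1) → Fin m → Bool,
            (if gmap ω' k = b then ν ω' else 0)
            = if ω' k = Fin.tail b then ν ω' else 0 := by
          intro ω'
          refine if_congr ?_ rfl rfl
          rw [hcons ω', hb0]
          simp
        rw [Finset.sum_congr rfl (fun ω' _ => e ω'), ← Finset.sum_filter, hmarg k (Fin.tail b)]
        rw [show (Finset.univ.filter (fun i => b i = true)).card = cardb b from rfl,
          cardb_split b, Wg_split pf b, Zg_succ pf (k:ℕ)]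
        simp only [hb0, if_true, hpf0]
        norm_num
        exact if_congr (by unfold cardb; omega) rfl rfl
    · intro ω hpos k l hkl i
      obtain ⟨x, _, hx⟩ := Finset.exists_ne_zero_of_sum_ne_zero (ne_of_gt hpos)
      by_cases hP : gmap x = ω
      swap
      · rw [if_neg hP] at hx
        exact absurd rfl hx
      rw [if_pos hP] at hx
      have hνpos : 0 < ν x := lt_of_le_of_ne (hnn x) (Ne.symm hx)
      subst hP
      revert i
      refine Fin.cases ?_ ?_
      · intro _
        exact Fin.cons_zero _ _
      · intro j hki
        simp only [gmap, Fin.cons_succ] at hki ⊢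
        exact hmono x hνpos k l hkl j hki
end

section
/- Let $\mu$ be a probability measure on a finite partially ordered set $S$ and $\nu$ a probability measure on a finite partially ordered set $T$, with a relation $\prec \subseteq S \times T$. There exists a coupling $(X,Y)$ with $X \sim \mu$, $Y \sim \nu$ and $X \prec Y$ almost surely, if and only if for every subset $C \subseteq S$, $\mu(C) \le \nu(N(C))$ where $N(C) = \{t \in T : s \prec t \text{ for some } s \in C\}$. -/
open Finset
open scoped Classical

variable {S T : Type} [Fintype S] [Fintype T] [DecidableEq S] [DecidableEq T]

noncomputable def strassenNbhd (r : S → T → Prop) (C : Finset S) : Finset T :=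
  Finset.univ.filter (fun t => ∃ s ∈ C, r s t)

lemma mem_strassenNbhd {r : S → T → Prop} {C : Finset S} {t : T} :
    t ∈ strassenNbhd r C ↔ ∃ s ∈ C, r s t := by
  simp [strassenNbhd]

lemma strassenNbhd_mono {r : S → T → Prop} {C D : Finset S} (h : C ⊆ D) :
    strassenNbhd r C ⊆ strassenNbhd r D := by
  intro t ht
  rw [mem_strassenNbhd] at *
  obtain ⟨s, hs, hr⟩ := ht
  exact ⟨s, h hs, hr⟩

lemma strassenNbhd_union {r : S → T → Prop} {C D : Finset S} :
    strassenNbhd r (C ∪ D) = strassenNbhd r C ∪ strassenNbhd r D := by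
  ext t
  simp only [mem_strassenNbhd, mem_union]
  constructor
  · rintro ⟨s, hs | hs, hr⟩
    · exact Or.inl ⟨s, hs, hr⟩
    · exact Or.inr ⟨s, hs, hr⟩
  · rintro (⟨s, hs, hr⟩ | ⟨s, hs, hr⟩)
    · exact ⟨s, Or.inl hs, hr⟩
    · exact ⟨s, Or.inr hs, hr⟩

noncomputable def strassenMeasure (r : S → T → Prop) (μ : S → ℝ) (ν : T → ℝ) : ℕ :=
  ((univ.filter (fun s => μ s ≠ 0)).card + (univ.filter (fun t => ν t ≠ 0)).card)
    * (Fintype.card (Finset S) + 1)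
  + (univ.filter (fun C : Finset S =>
      ∑ s ∈ C, μ s ≠ ∑ t ∈ strassenNbhd r C, ν t)).card

lemma strassen_meas_lt₁ {a a' b b' B : ℕ} (hB : b' ≤ B) (ha : a' < a) :
    a' * (B + 1) + b' < a * (B + 1) + b := by
  have : a' * (B+1) + b' < (a' + 1) * (B + 1) := by
    rw [add_mul, one_mul]; omega
  have h2 : (a' + 1) * (B + 1) ≤ a * (B + 1) := Nat.mul_le_mul_right _ ha
  omega

lemma strassen_meas_lt₂ {a a' b b' B : ℕ} (ha : a' ≤ a) (hb : b' < b) :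
    a' * (B + 1) + b' < a * (B + 1) + b := by
  have := Nat.mul_le_mul_right (B+1) ha
  omega

lemma sum_if_notMem (C D : Finset S) (f : S → ℝ) :
    ∑ s ∈ C, (if s ∈ D then 0 else f s) = ∑ s ∈ C \ D, f s := by
  rw [Finset.sdiff_eq_filter, Finset.sum_filter]
  exact Finset.sum_congr rfl (fun s _ => by by_cases h : s ∈ D <;> simp [h])

lemma sum_if_mem (C D : Finset S) (f : S → ℝ) :
    ∑ s ∈ C, (if s ∈ D then f s else 0) = ∑ s ∈ C ∩ D, f s := by
  rw [← Finset.sum_filter, Finset.filter_mem_eq_inter]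

theorem strassen_aux (S T : Type) [Fintype S] [Fintype T] [DecidableEq S] [DecidableEq T] :
    ∀ (N : ℕ) (r : S → T → Prop) (μ : S → ℝ) (ν : T → ℝ),
    (∀ s, 0 ≤ μ s) → (∀ t, 0 ≤ ν t) → (∑ s, μ s = ∑ t, ν t) →
    (∀ C : Finset S, ∑ s ∈ C, μ s ≤ ∑ t ∈ strassenNbhd r C, ν t) →
    strassenMeasure r μ ν ≤ N →
    ∃ π : S × T → ℝ, (∀ x, 0 ≤ π x) ∧ (∀ s, ∑ t, π (s,t) = μ s) ∧
      (∀ t, ∑ s, π (s,t) = ν t) ∧ ∀ x, 0 < π x → r x.1 x.2 := by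
  intro N
  induction N using Nat.strong_induction_on with
  | _ N ih =>
  intro r μ ν hμ0 hν0 htot hcond hN
  by_cases hM : ∑ s, μ s = 0
  · -- zero case
    have hμz : ∀ s, μ s = 0 := by
      intro s
      have := (Finset.sum_eq_zero_iff_of_nonneg (fun s _ => hμ0 s)).1 hM s (mem_univ s)
      exact this
    have hνz : ∀ t, ν t = 0 := by
      intro t
      have h : ∑ t, ν t = 0 := htot ▸ hM
      exact (Finset.sum_eq_zero_iff_of_nonneg (fun t _ => hν0 t)).1 h t (mem_univ t)
    exact ⟨fun _ => 0, fun x => le_refl 0, fun s => by simp [hμz s],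
      fun t => by simp [hνz t], fun x hx => absurd hx (by simp)⟩
  · have hMpos : 0 < ∑ s, μ s := lt_of_le_of_ne (Finset.sum_nonneg fun s _ => hμ0 s) (Ne.symm hM)
    by_cases hsplit : ∃ C₀ : Finset S, (0 < ∑ s ∈ C₀, μ s) ∧ (∑ s ∈ C₀, μ s < ∑ s, μ s) ∧
        (∑ s ∈ C₀, μ s = ∑ t ∈ strassenNbhd r C₀, ν t)
    · obtain ⟨C₀, hC₀pos, hC₀lt, hC₀tight⟩ := hsplit
      set N₀ := strassenNbhd r C₀ with hN₀
      set μ₁ : S → ℝ := fun s => if s ∈ C₀ then μ s else 0 with hμ₁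
      set ν₁ : T → ℝ := fun t => if t ∈ N₀ then ν t else 0 with hν₁
      set μ₂ : S → ℝ := fun s => if s ∈ C₀ then 0 else μ s with hμ₂
      set ν₂ : T → ℝ := fun t => if t ∈ N₀ then 0 else ν t with hν₂
      set r' : S → T → Prop := fun s t => r s t ∧ t ∉ N₀ with hr'
      have hμ₁0 : ∀ s, 0 ≤ μ₁ s := fun s => by by_cases h : s ∈ C₀ <;> simp [hμ₁, h, hμ0 s]
      have hν₁0 : ∀ t, 0 ≤ ν₁ t := fun t => by by_cases h : t ∈ N₀ <;> simp [hν₁, h, hν0 t]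
      have hμ₂0 : ∀ s, 0 ≤ μ₂ s := fun s => by by_cases h : s ∈ C₀ <;> simp [hμ₂, h, hμ0 s]
      have hν₂0 : ∀ t, 0 ≤ ν₂ t := fun t => by by_cases h : t ∈ N₀ <;> simp [hν₂, h, hν0 t]
      have sumμ₁ : ∀ C : Finset S, ∑ s ∈ C, μ₁ s = ∑ s ∈ C ∩ C₀, μ s := fun C => sum_if_mem C C₀ μ
      have sumμ₂ : ∀ C : Finset S, ∑ s ∈ C, μ₂ s = ∑ s ∈ C \ C₀, μ s := fun C => sum_if_notMem C C₀ μ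
      have sumν₁ : ∀ D : Finset T, ∑ t ∈ D, ν₁ t = ∑ t ∈ D ∩ N₀, ν t := fun D => sum_if_mem D N₀ ν
      have sumν₂ : ∀ D : Finset T, ∑ t ∈ D, ν₂ t = ∑ t ∈ D \ N₀, ν t := fun D => sum_if_notMem D N₀ ν
      have hNbhd' : ∀ C : Finset S, strassenNbhd r' C = strassenNbhd r C \ N₀ := by
        intro C
        ext t
        simp only [mem_strassenNbhd, mem_sdiff, hr']
        constructor
        · rintro ⟨s, hs, hrst, hnot⟩
          exact ⟨⟨s, hs, hrst⟩, hnot⟩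
        · rintro ⟨⟨s, hs, hrst⟩, hnot⟩
          exact ⟨s, hs, hrst, hnot⟩
      -- subproblem 1 hypotheses
      have htot1 : ∑ s, μ₁ s = ∑ t, ν₁ t := by
        rw [sumμ₁, sumν₁, univ_inter, univ_inter, hC₀tight]
      have hcond1 : ∀ C : Finset S, ∑ s ∈ C, μ₁ s ≤ ∑ t ∈ strassenNbhd r C, ν₁ t := by
        intro C
        rw [sumμ₁, sumν₁]
        calc ∑ s ∈ C ∩ C₀, μ s ≤ ∑ t ∈ strassenNbhd r (C ∩ C₀), ν t := hcond _
          _ ≤ ∑ t ∈ strassenNbhd r C ∩ N₀, ν t := by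
              apply Finset.sum_le_sum_of_subset_of_nonneg
              · exact Finset.subset_inter (strassenNbhd_mono inter_subset_left)
                  (strassenNbhd_mono inter_subset_right)
              · exact fun t _ _ => hν0 t
      -- subproblem 2 hypotheses
      have htot2 : ∑ s, μ₂ s = ∑ t, ν₂ t := by
        rw [sumμ₂, sumν₂]
        have h1 : ∑ s ∈ univ \ C₀, μ s + ∑ s ∈ C₀, μ s = ∑ s, μ s :=
          Finset.sum_sdiff (subset_univ C₀)
        have h2 : ∑ t ∈ univ \ N₀, ν t + ∑ t ∈ N₀, ν t = ∑ t, ν t :=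
          Finset.sum_sdiff (subset_univ N₀)
        linarith
      have hcond2 : ∀ C : Finset S, ∑ s ∈ C, μ₂ s ≤ ∑ t ∈ strassenNbhd r' C, ν₂ t := by
        intro C
        rw [sumμ₂, hNbhd', sumν₂, Finset.sdiff_idem]
        have h1 : ∑ s ∈ C \ C₀, μ s + ∑ s ∈ C₀, μ s = ∑ s ∈ C ∪ C₀, μ s := by
          rw [← Finset.sum_union Finset.sdiff_disjoint, Finset.sdiff_union_self_eq_union]
        have h2 : ∑ t ∈ strassenNbhd r C \ N₀, ν t + ∑ t ∈ N₀, ν t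
            = ∑ t ∈ strassenNbhd r C ∪ N₀, ν t := by
          rw [← Finset.sum_union Finset.sdiff_disjoint, Finset.sdiff_union_self_eq_union]
        have h3 : ∑ s ∈ C ∪ C₀, μ s ≤ ∑ t ∈ strassenNbhd r C ∪ N₀, ν t := by
          have := hcond (C ∪ C₀)
          rwa [strassenNbhd_union] at this
        linarith
      -- measures decrease
      have hsuppν₁ : (univ.filter (fun t => ν₁ t ≠ 0)) ⊆ (univ.filter (fun t => ν t ≠ 0)) := by
        intro t ht
        simp only [mem_filter, mem_univ, true_and] at ht ⊢
        intro h0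
        apply ht
        simp only [hν₁, h0]
        split <;> rfl
      have hsuppμ₂ : (univ.filter (fun s => μ₂ s ≠ 0)) ⊆ (univ.filter (fun s => μ s ≠ 0)) := by
        intro s hs
        simp only [mem_filter, mem_univ, true_and] at hs ⊢
        intro h0
        apply hs
        simp only [hμ₂, h0]
        split <;> rfl
      have hsuppμ₁ : (univ.filter (fun s => μ₁ s ≠ 0)) ⊂ (univ.filter (fun s => μ s ≠ 0)) := by
        have hsub : (univ.filter (fun s => μ₁ s ≠ 0)) ⊆ (univ.filter (fun s => μ s ≠ 0)) := by
          intro s hs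
          simp only [mem_filter, mem_univ, true_and] at hs ⊢
          intro h0
          apply hs
          simp only [hμ₁, h0]
          split <;> rfl
        have hex : ∃ s₀, s₀ ∉ C₀ ∧ μ s₀ ≠ 0 := by
          by_contra hno
          push_neg at hno
          have : ∑ s ∈ univ \ C₀, μ s = 0 := Finset.sum_eq_zero (by
            intro s hs
            rw [mem_sdiff] at hs
            exact hno s hs.2)
          have h1 : ∑ s ∈ univ \ C₀, μ s + ∑ s ∈ C₀, μ s = ∑ s, μ s :=
            Finset.sum_sdiff (subset_univ C₀)
          linarith
        obtain ⟨s₀, hs₀C, hs₀⟩ := hex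
        refine ⟨hsub, fun hall => ?_⟩
        have h1 : s₀ ∈ univ.filter (fun s => μ s ≠ 0) := by simp [hs₀]
        have h2 := hall h1
        simp only [mem_filter, mem_univ, true_and, hμ₁] at h2
        rw [if_neg hs₀C] at h2
        exact h2 rfl
      have hsuppν₂ : (univ.filter (fun t => ν₂ t ≠ 0)) ⊂ (univ.filter (fun t => ν t ≠ 0)) := by
        have hsub : (univ.filter (fun t => ν₂ t ≠ 0)) ⊆ (univ.filter (fun t => ν t ≠ 0)) := by
          intro t ht
          simp only [mem_filter, mem_univ, true_and] at ht ⊢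
          intro h0
          apply ht
          simp only [hν₂, h0]
          split <;> rfl
        have hex : ∃ t₀, t₀ ∈ N₀ ∧ ν t₀ ≠ 0 := by
          by_contra hno
          push_neg at hno
          have : ∑ t ∈ N₀, ν t = 0 := Finset.sum_eq_zero (fun t ht => hno t ht)
          rw [← hC₀tight] at this
          linarith
        obtain ⟨t₀, ht₀N, ht₀⟩ := hex
        refine ⟨hsub, fun hall => ?_⟩
        have h1 : t₀ ∈ univ.filter (fun t => ν t ≠ 0) := by simp [ht₀]
        have h2 := hall h1
        simp only [mem_filter, mem_univ, true_and, hν₂] at h2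
        rw [if_pos ht₀N] at h2
        exact h2 rfl
      have hb1 : (univ.filter (fun C : Finset S =>
          ∑ s ∈ C, μ₁ s ≠ ∑ t ∈ strassenNbhd r C, ν₁ t)).card ≤ Fintype.card (Finset S) := by
        exact le_trans (Finset.card_filter_le _ _) (le_of_eq (Finset.card_univ))
      have hb2 : (univ.filter (fun C : Finset S =>
          ∑ s ∈ C, μ₂ s ≠ ∑ t ∈ strassenNbhd r' C, ν₂ t)).card ≤ Fintype.card (Finset S) := by
        exact le_trans (Finset.card_filter_le _ _) (le_of_eq (Finset.card_univ))
      have hm1 : strassenMeasure r μ₁ ν₁ < N := by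
        apply lt_of_lt_of_le _ hN
        apply strassen_meas_lt₁ hb1
        have := Finset.card_lt_card hsuppμ₁
        have := Finset.card_le_card hsuppν₁
        omega
      have hm2 : strassenMeasure r' μ₂ ν₂ < N := by
        apply lt_of_lt_of_le _ hN
        apply strassen_meas_lt₁ hb2
        have := Finset.card_lt_card hsuppν₂
        have := Finset.card_le_card hsuppμ₂
        omega
      obtain ⟨π₁, hπ₁0, hπ₁r, hπ₁c, hπ₁s⟩ := ih _ hm1 r μ₁ ν₁ hμ₁0 hν₁0 htot1 hcond1 le_rfl
      obtain ⟨π₂, hπ₂0, hπ₂r, hπ₂c, hπ₂s⟩ := ih _ hm2 r' μ₂ ν₂ hμ₂0 hν₂0 htot2 hcond2 le_rfl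
      refine ⟨fun x => π₁ x + π₂ x, fun x => add_nonneg (hπ₁0 x) (hπ₂0 x), ?_, ?_, ?_⟩
      · intro s
        rw [Finset.sum_add_distrib, hπ₁r s, hπ₂r s]
        by_cases h : s ∈ C₀ <;> simp [hμ₁, hμ₂, h]
      · intro t
        rw [Finset.sum_add_distrib, hπ₁c t, hπ₂c t]
        by_cases h : t ∈ N₀ <;> simp [hν₁, hν₂, h]
      · intro x hx
        rcases lt_or_ge 0 (π₁ x) with h | h
        · exact hπ₁s x h
        · have hx' : 0 < π₁ x + π₂ x := hx
          have : 0 < π₂ x := by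
            have := hπ₁0 x
            linarith
          have := hπ₂s x this
          rw [hr'] at this
          exact this.1
    · push_neg at hsplit
      have hsex : ∃ s, μ s ≠ 0 := by
        by_contra hno
        push_neg at hno
        exact hM (Finset.sum_eq_zero (fun s _ => hno s))
      obtain ⟨s, hs⟩ := hsex
      have hspos : 0 < μ s := lt_of_le_of_ne (hμ0 s) (Ne.symm hs)
      have htsum : 0 < ∑ t ∈ strassenNbhd r {s}, ν t := by
        refine lt_of_lt_of_le ?_ (hcond {s})
        simpa using hspos
      have htex : ∃ t ∈ strassenNbhd r {s}, ν t ≠ 0 := by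
        by_contra hno
        push_neg at hno
        rw [Finset.sum_eq_zero (fun t ht => hno t ht)] at htsum
        exact lt_irrefl 0 htsum
      obtain ⟨t, htN, htne⟩ := htex
      have htpos : 0 < ν t := lt_of_le_of_ne (hν0 t) (Ne.symm htne)
      have hrst : r s t := by
        obtain ⟨s', hs', h⟩ := mem_strassenNbhd.1 htN
        rw [mem_singleton] at hs'
        exact hs' ▸ h
      set 𝒞 : Finset (Finset S) := univ.filter (fun C => s ∉ C ∧ t ∈ strassenNbhd r C) with h𝒞
      set slack : Finset S → ℝ :=
        fun C => ∑ t' ∈ strassenNbhd r C, ν t' - ∑ s' ∈ C, μ s' with hslack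
      set E : Finset ℝ := insert (min (μ s) (ν t)) (𝒞.image slack) with hE
      have hEne : E.Nonempty := insert_nonempty _ _
      set ε := E.min' hEne with hεdef
      have hεmem : ε ∈ E := E.min'_mem hEne
      have hslackpos : ∀ C ∈ 𝒞, 0 < slack C := by
        intro C hC
        rw [h𝒞, mem_filter] at hC
        obtain ⟨-, hsC, htC⟩ := hC
        rcases lt_or_ge 0 (slack C) with h | h
        · exact h
        exfalso
        have heq : ∑ s' ∈ C, μ s' = ∑ t' ∈ strassenNbhd r C, ν t' := by
          refine le_antisymm (hcond C) ?_
          rw [hslack] at h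
          simp only at h
          linarith
        have hClt : ∑ s' ∈ C, μ s' < ∑ s', μ s' := by
          have hsub : C ⊆ univ.erase s :=
            fun x hx => mem_erase.2 ⟨fun he => hsC (he ▸ hx), mem_univ x⟩
          have h1 : ∑ s' ∈ C, μ s' ≤ ∑ s' ∈ univ.erase s, μ s' :=
            Finset.sum_le_sum_of_subset_of_nonneg hsub (fun x _ _ => hμ0 x)
          have h2 : ∑ s' ∈ univ.erase s, μ s' + μ s = ∑ s', μ s' :=
            Finset.sum_erase_add univ μ (mem_univ s)
          linarith
        have hCpos : 0 < ∑ s' ∈ C, μ s' := by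
          rcases lt_or_ge 0 (∑ s' ∈ C, μ s') with h' | h'
          · exact h'
          have hzero : ∑ s' ∈ C, μ s' = 0 :=
            le_antisymm h' (Finset.sum_nonneg (fun x _ => hμ0 x))
          have hle : ν t ≤ ∑ t' ∈ strassenNbhd r C, ν t' :=
            Finset.single_le_sum (fun t' _ => hν0 t') htC
          rw [← heq, hzero] at hle
          linarith
        exact hsplit C hCpos hClt heq
      have hεpos : 0 < ε := by
        rcases mem_insert.1 hεmem with h | h
        · rw [h]
          exact lt_min hspos htpos
        · obtain ⟨C, hC, hCe⟩ := Finset.mem_image.1 h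
          rw [← hCe]
          exact hslackpos C hC
      have hεs : ε ≤ μ s :=
        le_trans (E.min'_le _ (mem_insert_self _ _)) (min_le_left _ _)
      have hεt : ε ≤ ν t :=
        le_trans (E.min'_le _ (mem_insert_self _ _)) (min_le_right _ _)
      set μ' : S → ℝ := fun x => μ x - (if x = s then ε else 0) with hμ'
      set ν' : T → ℝ := fun y => ν y - (if y = t then ε else 0) with hν'
      have hμ'x : ∀ x, μ' x = μ x - (if x = s then ε else 0) := fun x => rfl
      have hν'x : ∀ y, ν' y = ν y - (if y = t then ε else 0) := fun y => rfl
      have sumμ' : ∀ C : Finset S,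
          ∑ x ∈ C, μ' x = ∑ x ∈ C, μ x - (if s ∈ C then ε else 0) := by
        intro C
        rw [hμ', Finset.sum_sub_distrib]
        congr 1
        exact Finset.sum_ite_eq' C s (fun _ => ε)
      have sumν' : ∀ D : Finset T,
          ∑ y ∈ D, ν' y = ∑ y ∈ D, ν y - (if t ∈ D then ε else 0) := by
        intro D
        rw [hν', Finset.sum_sub_distrib]
        congr 1
        exact Finset.sum_ite_eq' D t (fun _ => ε)
      have hμ'0 : ∀ x, 0 ≤ μ' x := by
        intro x
        rw [hμ'x x]
        by_cases h : x = s
        · rw [if_pos h, h]; linarith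
        · rw [if_neg h]; linarith [hμ0 x]
      have hν'0 : ∀ y, 0 ≤ ν' y := by
        intro y
        rw [hν'x y]
        by_cases h : y = t
        · rw [if_pos h, h]; linarith
        · rw [if_neg h]; linarith [hν0 y]
      have htot' : ∑ x, μ' x = ∑ y, ν' y := by
        rw [sumμ' univ, sumν' univ, if_pos (mem_univ s), if_pos (mem_univ t), htot]
      have hcond' : ∀ C : Finset S, ∑ x ∈ C, μ' x ≤ ∑ y ∈ strassenNbhd r C, ν' y := by
        intro C
        rw [sumμ' C, sumν' _]
        by_cases hsC : s ∈ C
        · have htC : t ∈ strassenNbhd r C := mem_strassenNbhd.2 ⟨s, hsC, hrst⟩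
          rw [if_pos hsC, if_pos htC]
          linarith [hcond C]
        · by_cases htC : t ∈ strassenNbhd r C
          · rw [if_neg hsC, if_pos htC]
            have hC𝒞 : C ∈ 𝒞 := by
              rw [h𝒞, mem_filter]
              exact ⟨mem_univ C, hsC, htC⟩
            have hle : ε ≤ slack C :=
              E.min'_le _ (mem_insert_of_mem (Finset.mem_image_of_mem slack hC𝒞))
            rw [hslack] at hle
            simp only at hle
            linarith
          · rw [if_neg hsC, if_neg htC]
            linarith [hcond C]
      have hsubμ : (univ.filter (fun x => μ' x ≠ 0)) ⊆ (univ.filter (fun x => μ x ≠ 0)) := by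
        intro x hx
        simp only [mem_filter, mem_univ, true_and] at hx ⊢
        intro h0
        apply hx
        rw [hμ'x x, h0]
        by_cases h : x = s
        · rw [h] at h0
          exact absurd h0 hs
        · rw [if_neg h]; ring
      have hsubν : (univ.filter (fun y => ν' y ≠ 0)) ⊆ (univ.filter (fun y => ν y ≠ 0)) := by
        intro y hy
        simp only [mem_filter, mem_univ, true_and] at hy ⊢
        intro h0
        apply hy
        rw [hν'x y, h0]
        by_cases h : y = t
        · rw [h] at h0
          exact absurd h0 htne
        · rw [if_neg h]; ring
      have htightpersist : ∀ C : Finset S,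
          ∑ x ∈ C, μ x = ∑ y ∈ strassenNbhd r C, ν y →
          ∑ x ∈ C, μ' x = ∑ y ∈ strassenNbhd r C, ν' y := by
        intro C hC
        rw [sumμ' C, sumν' _]
        by_cases hsC : s ∈ C
        · have htC : t ∈ strassenNbhd r C := mem_strassenNbhd.2 ⟨s, hsC, hrst⟩
          rw [if_pos hsC, if_pos htC, hC]
        · by_cases htC : t ∈ strassenNbhd r C
          · exfalso
            have hC𝒞 : C ∈ 𝒞 := by
              rw [h𝒞, mem_filter]
              exact ⟨mem_univ C, hsC, htC⟩
            have := hslackpos C hC𝒞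
            rw [hslack] at this
            simp only at this
            linarith
          · rw [if_neg hsC, if_neg htC, hC]
      have hrec : strassenMeasure r μ' ν' < strassenMeasure r μ ν := by
        by_cases hcase : ε = μ s ∨ ε = ν t
        · have hbb : (univ.filter (fun C : Finset S =>
              ∑ x ∈ C, μ' x ≠ ∑ y ∈ strassenNbhd r C, ν' y)).card ≤ Fintype.card (Finset S) :=
            le_trans (Finset.card_filter_le _ _) (le_of_eq Finset.card_univ)
          apply strassen_meas_lt₁ hbb
          rcases hcase with h | h
          · have hssub : (univ.filter (fun x => μ' x ≠ 0)) ⊂ (univ.filter (fun x => μ x ≠ 0)) := by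
              refine ⟨hsubμ, fun hall => ?_⟩
              have h1 : s ∈ univ.filter (fun x => μ x ≠ 0) := by simp [hs]
              have h2 := hall h1
              simp only [mem_filter, mem_univ, true_and] at h2
              rw [hμ'x s, if_pos rfl] at h2
              apply h2
              rw [h]; ring
            have := Finset.card_lt_card hssub
            have := Finset.card_le_card hsubν
            omega
          · have htsub : (univ.filter (fun y => ν' y ≠ 0)) ⊂ (univ.filter (fun y => ν y ≠ 0)) := by
              refine ⟨hsubν, fun hall => ?_⟩
              have h1 : t ∈ univ.filter (fun y => ν y ≠ 0) := by simp [htne]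
              have h2 := hall h1
              simp only [mem_filter, mem_univ, true_and] at h2
              rw [hν'x t, if_pos rfl] at h2
              apply h2
              rw [h]; ring
            have := Finset.card_lt_card htsub
            have := Finset.card_le_card hsubμ
            omega
        · push_neg at hcase
          obtain ⟨hcs, hct⟩ := hcase
          have hεimg : ε ∈ 𝒞.image slack := by
            rcases mem_insert.1 hεmem with h | h
            · exfalso
              rcases min_choice (μ s) (ν t) with hmin | hmin
              · exact hcs (h.trans hmin)
              · exact hct (h.trans hmin)
            · exact h
          obtain ⟨Cx, hCx𝒞, hCxε⟩ := Finset.mem_image.1 hεimg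
          have hCxprop := hCx𝒞
          rw [h𝒞, mem_filter] at hCxprop
          obtain ⟨-, hsCx, htCx⟩ := hCxprop
          have htightsub : (univ.filter (fun C : Finset S =>
              ∑ x ∈ C, μ' x ≠ ∑ y ∈ strassenNbhd r C, ν' y)) ⊂
              (univ.filter (fun C : Finset S =>
              ∑ x ∈ C, μ x ≠ ∑ y ∈ strassenNbhd r C, ν y)) := by
            constructor
            · intro C hC
              simp only [mem_filter, mem_univ, true_and] at hC ⊢
              intro h0
              exact hC (htightpersist C h0)
            · intro hall
              have h1 : Cx ∈ univ.filter (fun C : Finset S =>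
                  ∑ x ∈ C, μ x ≠ ∑ y ∈ strassenNbhd r C, ν y) := by
                simp only [mem_filter, mem_univ, true_and]
                intro h0
                have := hslackpos Cx hCx𝒞
                rw [hslack] at this
                simp only at this
                linarith
              have h2 := hall h1
              simp only [mem_filter, mem_univ, true_and] at h2
              apply h2
              rw [sumμ' Cx, sumν' _, if_neg hsCx, if_pos htCx]
              rw [hslack] at hCxε
              simp only at hCxε
              linarith
          apply strassen_meas_lt₂
          · have := Finset.card_le_card hsubμ
            have := Finset.card_le_card hsubν
            omega
          · exact Finset.card_lt_card htightsub
      obtain ⟨π', hπ'0, hπ'r, hπ'c, hπ's⟩ :=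
        ih _ (lt_of_lt_of_le hrec hN) r μ' ν' hμ'0 hν'0 htot' hcond' le_rfl
      refine ⟨fun x => π' x + (if x = (s, t) then ε else 0), ?_, ?_, ?_, ?_⟩
      · intro x
        refine add_nonneg (hπ'0 x) ?_
        split
        · exact le_of_lt hεpos
        · exact le_refl 0
      · intro s₀
        rw [Finset.sum_add_distrib, hπ'r s₀]
        have hsum : ∑ t' : T, (if ((s₀, t') : S × T) = (s, t) then ε else 0)
            = if s₀ = s then ε else 0 := by
          by_cases h : s₀ = s
          · subst h
            rw [if_pos rfl]
            have : ∀ t' : T, (if ((s₀, t') : S × T) = (s₀, t) then ε else 0)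
                = if t' = t then ε else 0 := by
              intro t'
              congr 1
              simp [Prod.ext_iff]
            rw [Finset.sum_congr rfl (fun t' _ => this t')]
            rw [Finset.sum_ite_eq' univ t (fun _ => ε), if_pos (mem_univ t)]
          · rw [if_neg h]
            apply Finset.sum_eq_zero
            intro t' _
            rw [if_neg]
            intro hc
            exact h (congrArg Prod.fst hc)
        rw [hsum, hμ'x s₀]
        by_cases h : s₀ = s <;> simp [h]
      · intro t₀
        rw [Finset.sum_add_distrib, hπ'c t₀]
        have hsum : ∑ s' : S, (if ((s', t₀) : S × T) = (s, t) then ε else 0)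
            = if t₀ = t then ε else 0 := by
          by_cases h : t₀ = t
          · subst h
            rw [if_pos rfl]
            have : ∀ s' : S, (if ((s', t₀) : S × T) = (s, t₀) then ε else 0)
                = if s' = s then ε else 0 := by
              intro s'
              congr 1
              simp [Prod.ext_iff]
            rw [Finset.sum_congr rfl (fun s' _ => this s')]
            rw [Finset.sum_ite_eq' univ s (fun _ => ε), if_pos (mem_univ s)]
          · rw [if_neg h]
            apply Finset.sum_eq_zero
            intro s' _
            rw [if_neg]
            intro hc
            exact h (congrArg Prod.snd hc)
        rw [hsum, hν'x t₀]
        by_cases h : t₀ = t <;> simp [h]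
      · intro x hx
        by_cases h : x = (s, t)
        · rw [h]
          exact hrst
        · have hx' : 0 < π' x + (if x = (s, t) then ε else 0) := hx
          rw [if_neg h, add_zero] at hx'
          exact hπ's x hx'

/-- Strassen's theorem, finite version: given probability mass functions `μ` on
a finite set `S` and `ν` on a finite set `T` and a relation `r` between them,
a coupling `π` supported on `r` with marginals `μ` and `ν` exists if and only if
`μ(C) ≤ ν(N(C))` for every `C ⊆ S`, where `N(C)` is the set of `t` related to
some element of `C`. -/
theorem strassen_finite (S T : Type) [Fintype S] [Fintype T]
    [DecidableEq S] [DecidableEq T]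
    (r : S → T → Prop) [∀ s t, Decidable (r s t)]
    (μ : S → ℝ) (ν : T → ℝ)
    (hμ0 : ∀ s, 0 ≤ μ s) (hν0 : ∀ t, 0 ≤ ν t)
    (hμ1 : ∑ s : S, μ s = 1) (hν1 : ∑ t : T, ν t = 1) :
    (∃ π : S × T → ℝ,
      (∀ x, 0 ≤ π x) ∧
      (∀ s : S, ∑ t : T, π (s, t) = μ s) ∧
      (∀ t : T, ∑ s : S, π (s, t) = ν t) ∧
      (∀ x : S × T, 0 < π x → r x.1 x.2)) ↔
    (∀ C : Finset S,
      ∑ s ∈ C, μ s ≤ ∑ t ∈ Finset.filter (fun t : T => ∃ s ∈ C, r s t) Finset.univ, ν t) := by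
  have hfilter : ∀ C : Finset S,
      Finset.filter (fun t : T => ∃ s ∈ C, r s t) Finset.univ = strassenNbhd r C := by
    intro C
    rw [strassenNbhd]
    exact (Finset.filter_congr_decidable _ _ _).symm
  constructor
  · rintro ⟨π, h0, hrow, hcol, hsupp⟩ C
    rw [hfilter C]
    have h2 : ∀ s ∈ C, ∑ t' ∈ univ \ strassenNbhd r C, π (s, t') = 0 := by
      intro s hsC
      apply Finset.sum_eq_zero
      intro t' ht'
      rw [mem_sdiff] at ht'
      by_contra hne
      have hpos : 0 < π (s, t') := lt_of_le_of_ne (h0 _) (Ne.symm hne)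
      have hr := hsupp _ hpos
      exact ht'.2 (mem_strassenNbhd.2 ⟨s, hsC, hr⟩)
    calc ∑ s ∈ C, μ s = ∑ s ∈ C, ∑ t' ∈ strassenNbhd r C, π (s, t') := by
          refine Finset.sum_congr rfl fun s hsC => ?_
          rw [← hrow s, ← Finset.sum_sdiff (subset_univ (strassenNbhd r C)), h2 s hsC, zero_add]
      _ = ∑ t' ∈ strassenNbhd r C, ∑ s ∈ C, π (s, t') := Finset.sum_comm
      _ ≤ ∑ t' ∈ strassenNbhd r C, ∑ s, π (s, t') := by
          refine Finset.sum_le_sum fun t' _ => ?_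
          exact Finset.sum_le_sum_of_subset_of_nonneg (subset_univ C) (fun x _ _ => h0 _)
      _ = ∑ t' ∈ strassenNbhd r C, ν t' := Finset.sum_congr rfl fun t' _ => hcol t'
  · intro hcond
    refine strassen_aux S T _ r μ ν hμ0 hν0 (by rw [hμ1, hν1]) ?_ le_rfl
    intro C
    rw [← hfilter C]
    exact hcond C
end

section
/- For all real $\alpha < 0$ and all $n \ge 1$, $1 \le k \le n$, the generalized Stirling numbers satisfy $(n - \alpha k)\, S_\alpha(n,k)^2 \ge (n - \alpha(k+1))\, S_\alpha(n,k+1)\, S_\alpha(n,k-1)$. -/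
/-- Generalized Stirling numbers: `S_α(1,1) = 1`, `S_α(n,0) = 0` for `n ≥ 1`,
`S_α(n,k) = 0` for `k > n`, and `S_α(n+1,k) = (n - α k) S_α(n,k) + S_α(n,k-1)`. -/
def genStirling (α : ℝ) : ℕ → ℕ → ℝ
  | 0, k => if k = 0 then 1 else 0
  | n + 1, k =>
      if k = 0 then 0
      else ((n : ℝ) - α * k) * genStirling α n k + genStirling α n (k - 1)

lemma genStirling_nonneg (α : ℝ) (hα : α < 0) : ∀ n k : ℕ, 0 ≤ genStirling α n k := by
  intro n
  induction n with
  | zero => intro k; simp only [genStirling]; split <;> norm_num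
  | succ n ih =>
    intro k
    rcases Nat.eq_zero_or_pos k with hk | hk
    · simp [genStirling, hk]
    · have hk0 : k ≠ 0 := by omega
      simp only [genStirling, if_neg hk0]
      have hαk : α * k ≤ 0 := mul_nonpos_of_nonpos_of_nonneg hα.le (Nat.cast_nonneg k)
      have hc : (0:ℝ) ≤ (n:ℝ) - α * k := by
        have : (0:ℝ) ≤ (n:ℝ) := Nat.cast_nonneg n
        linarith
      exact add_nonneg (mul_nonneg hc (ih k)) (ih (k-1))

lemma genStirling_zero_of_lt (α : ℝ) : ∀ n k : ℕ, n < k → genStirling α n k = 0 := by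
  intro n
  induction n with
  | zero =>
    intro k hk
    have : k ≠ 0 := by omega
    simp [genStirling, this]
  | succ n ih =>
    intro k hk
    have hk0 : k ≠ 0 := by omega
    simp only [genStirling, if_neg hk0]
    rw [ih k (by omega), ih (k-1) (by omega), mul_zero, add_zero]

lemma genStirling_pos (α : ℝ) (hα : α < 0) : ∀ n k : ℕ, 1 ≤ k → k ≤ n → 0 < genStirling α n k := by
  intro n
  induction n with
  | zero => intro k h1 h2; omega
  | succ n ih =>
    intro k h1 h2
    have hk0 : k ≠ 0 := by omega
    simp only [genStirling, if_neg hk0]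
    rcases Nat.lt_or_ge k (n+1) with h | h
    · have hk1 : (1:ℝ) ≤ (k:ℝ) := by exact_mod_cast h1
      have hn1 : (1:ℝ) ≤ (n:ℝ) := by
        have : 1 ≤ n := by omega
        exact_mod_cast this
      have hc : (0:ℝ) < (n:ℝ) - α * k := by nlinarith
      exact add_pos_of_pos_of_nonneg (mul_pos hc (ih k h1 (by omega)))
        (genStirling_nonneg α hα n (k-1))
    · have hk : k = n + 1 := by omega
      subst hk
      rw [genStirling_zero_of_lt α n (n+1) (by omega), mul_zero, zero_add,
        Nat.add_sub_cancel]
      rcases Nat.eq_zero_or_pos n with hn | hn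
      · subst hn; simp [genStirling]
      · exact ih n hn le_rfl

lemma genStirling_succ (α : ℝ) (n k : ℕ) (hk : k ≠ 0) :
    genStirling α (n+1) k =
      ((n : ℝ) - α * k) * genStirling α n k + genStirling α n (k - 1) := by
  simp [genStirling, hk]

private lemma genStirling_alg (a0 a1 a2 a3 c1 c2 c3 W2 W3 : ℝ)
    (pa0 : 0 ≤ a0) (pa1 : 0 < a1) (pa2 : 0 < a2) (pa3 : 0 ≤ a3)
    (pc1 : 0 < c1) (pc2 : 0 < c2) (pc3 : 0 ≤ c3) (pW3 : 0 ≤ W3)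
    (h1 : c3 * a3 * a1 ≤ c2 * a2 ^ 2)
    (h2 : c2 * a2 * a0 ≤ c1 * a1 ^ 2)
    (hW : W3 * c1 ≤ W2 * c2) :
    W3 * (c3 * a3 + a2) * (c1 * a1 + a0) ≤ W2 * (c2 * a2 + a1) ^ 2 := by
  have hmul : (c3 * a3 * a1) * (c2 * a2 * a0) ≤ (c2 * a2 ^ 2) * (c1 * a1 ^ 2) :=
    mul_le_mul h1 h2 (by positivity) (by positivity)
  have h3 : c3 * a3 * a0 ≤ c1 * a2 * a1 := by
    have hp : (0:ℝ) < c2 * a2 * a1 := by positivity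
    refine le_of_mul_le_mul_right ?_ hp
    nlinarith [hmul]
  have hkey : c2 * ((c3 * a3 + a2) * (c1 * a1 + a0)) ≤ c1 * (c2 * a2 + a1) ^ 2 := by
    nlinarith [mul_le_mul_of_nonneg_left h1 (mul_pos pc1 pc2).le, h2,
      mul_le_mul_of_nonneg_left h3 pc2.le]
  have t1 : W3 * (c2 * ((c3 * a3 + a2) * (c1 * a1 + a0))) ≤ W3 * (c1 * (c2 * a2 + a1) ^ 2) :=
    mul_le_mul_of_nonneg_left hkey pW3
  have t2 : (W3 * c1) * (c2 * a2 + a1) ^ 2 ≤ (W2 * c2) * (c2 * a2 + a1) ^ 2 :=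
    mul_le_mul_of_nonneg_right hW (sq_nonneg _)
  have h4 : c2 * (W3 * (c3 * a3 + a2) * (c1 * a1 + a0)) ≤ c2 * (W2 * (c2 * a2 + a1) ^ 2) := by
    nlinarith [t1, t2]
  exact le_of_mul_le_mul_left h4 pc2

/-- For `α < 0`: `(n - αk) S_α(n,k)² ≥ (n - α(k+1)) S_α(n,k+1) S_α(n,k-1)`. -/
theorem genStirling_gamma_log_concave (α : ℝ) (hα : α < 0) (n k : ℕ)
    (hn : 1 ≤ n) (hk1 : 1 ≤ k) (hkn : k ≤ n) :
    ((n : ℝ) - α * (k + 1)) * genStirling α n (k + 1) * genStirling α n (k - 1) ≤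
      ((n : ℝ) - α * k) * genStirling α n k ^ 2 := by
  induction n generalizing k with
  | zero => omega
  | succ n ih =>
    have hRnn : (0:ℝ) ≤ ((n+1 : ℕ) : ℝ) - α * k := by
      have hαk : α * (k:ℝ) ≤ 0 := mul_nonpos_of_nonpos_of_nonneg hα.le (Nat.cast_nonneg k)
      have : (0:ℝ) ≤ ((n+1 : ℕ) : ℝ) := Nat.cast_nonneg _
      linarith
    by_cases hktop : k = n + 1
    · subst hktop
      rw [genStirling_zero_of_lt α (n+1) (n+1+1) (by omega), mul_zero, zero_mul]
      exact mul_nonneg hRnn (sq_nonneg _)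
    · by_cases hk1' : k = 1
      · subst hk1'
        have h0 : genStirling α (n+1) (1-1) = 0 := by simp [genStirling]
        rw [h0, mul_zero]
        exact mul_nonneg hRnn (sq_nonneg _)
      · obtain ⟨m, rfl⟩ : ∃ m, k = m + 2 := ⟨k - 2, by omega⟩
        have hmn : m + 2 ≤ n := by omega
        have hn1' : 1 ≤ n := by omega
        have pa0 : 0 ≤ genStirling α n m := genStirling_nonneg α hα n m
        have pa1 : 0 < genStirling α n (m+1) := genStirling_pos α hα n (m+1) (by omega) (by omega)
        have pa2 : 0 < genStirling α n (m+2) := genStirling_pos α hα n (m+2) (by omega) (by omega)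
        have pa3 : 0 ≤ genStirling α n (m+3) := genStirling_nonneg α hα n (m+3)
        have hnR : (1:ℝ) ≤ (n:ℝ) := by exact_mod_cast hn1'
        have hmR : (0:ℝ) ≤ (m:ℝ) := Nat.cast_nonneg m
        have pc1 : (0:ℝ) < (n:ℝ) - α * ((m:ℝ) + 1) := by nlinarith
        have pc2 : (0:ℝ) < (n:ℝ) - α * ((m:ℝ) + 2) := by nlinarith
        have pc3 : (0:ℝ) ≤ (n:ℝ) - α * ((m:ℝ) + 3) := by nlinarith
        have pW3 : (0:ℝ) ≤ (n:ℝ) + 1 - α * ((m:ℝ) + 3) := by nlinarith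
        have hW : ((n:ℝ) + 1 - α * ((m:ℝ) + 3)) * ((n:ℝ) - α * ((m:ℝ) + 1)) ≤
            ((n:ℝ) + 1 - α * ((m:ℝ) + 2)) * ((n:ℝ) - α * ((m:ℝ) + 2)) := by nlinarith
        have h1 := ih (m+2) hn1' (by omega) hmn
        have h2 := ih (m+1) hn1' (by omega) (by omega)
        simp only [show m+2+1 = m+3 from rfl, show m+2-1 = m+1 from rfl,
          show m+1+1 = m+2 from rfl, show m+1-1 = m from rfl] at h1 h2
        push_cast at h1 h2
        have h1' : ((n:ℝ) - α * ((m:ℝ) + 3)) * genStirling α n (m+3) * genStirling α n (m+1) ≤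
            ((n:ℝ) - α * ((m:ℝ) + 2)) * genStirling α n (m+2) ^ 2 := by linarith
        have h2' : ((n:ℝ) - α * ((m:ℝ) + 2)) * genStirling α n (m+2) * genStirling α n m ≤
            ((n:ℝ) - α * ((m:ℝ) + 1)) * genStirling α n (m+1) ^ 2 := by linarith
        have H := genStirling_alg (genStirling α n m) (genStirling α n (m+1))
          (genStirling α n (m+2)) (genStirling α n (m+3))
          ((n:ℝ) - α * ((m:ℝ) + 1)) ((n:ℝ) - α * ((m:ℝ) + 2)) ((n:ℝ) - α * ((m:ℝ) + 3))
          ((n:ℝ) + 1 - α * ((m:ℝ) + 2)) ((n:ℝ) + 1 - α * ((m:ℝ) + 3))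
          pa0 pa1 pa2 pa3 pc1 pc2 pc3 pW3 h1' h2' hW
        simp only [show m+2+1 = m+3 from rfl, show m+2-1 = m+1 from rfl]
        rw [genStirling_succ α n (m+3) (by omega), genStirling_succ α n (m+2) (by omega),
          genStirling_succ α n (m+1) (by omega)]
        simp only [show m+3-1 = m+2 from rfl, show m+2-1 = m+1 from rfl,
          show m+1-1 = m from rfl]
        push_cast
        linarith [H]
end

section
/- Let $u:\{0,\dots,n\}\to\mathbb{R}_{\ge0}$ be log-concave with no internal zeros, let $p \in (0,1)$, and for $0 \le k \le n+1$ define $r(k) = \frac{p\,u(k-1)}{p\,u(k-1) + (1-p)\,u(k)}$ (with $u(-1)=u(n+1)=0$). Then $r(k)$ is nondecreasing in $k$. (Probabilistically: if $X$ has pmf proportional to $u$ and $I$ is an independent Bernoulli($p$), then $\Pr[I = 1 \mid X + I = k]$ is nondecreasing in $k$.) -/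
/-- Let `u : {0,…,n} → ℝ≥0` be log-concave with no internal zeros (extended by
zero outside `{0,…,n}`), let `p ∈ (0,1)`, and let
`r(k) = p u(k-1) / (p u(k-1) + (1-p) u(k))` with `u(-1) = u(n+1) = 0`
(so `r 0 = 0`). Then `r` is nondecreasing in `k` on `{0,…,n+1}`, at each step
where the conditioning events `{X + I = k}` and `{X + I = k+1}` have positive
probability. Probabilistically, `r(k) = Pr[I = 1 ∣ X + I = k]` for `X` with
pmf proportional to `u` and `I` an independent Bernoulli(p). -/
theorem bayes_ratio_nondecreasing (n : ℕ) (u : ℕ → ℝ) (p : ℝ)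
    (hp0 : 0 < p) (hp1 : p < 1)
    (hu0 : ∀ i, 0 ≤ u i)
    (husupp : ∀ j, n < j → u j = 0)
    (hulc : ∀ i, 1 ≤ i → u (i - 1) * u (i + 1) ≤ u i ^ 2)
    (hnoz : ∀ i j k : ℕ, i ≤ j → j ≤ k → 0 < u i → 0 < u k → 0 < u j)
    (r : ℕ → ℝ) (hr0 : r 0 = 0)
    (hrs : ∀ k : ℕ, r (k + 1) = p * u k / (p * u k + (1 - p) * u (k + 1))) :
    (r 0 ≤ r 1) ∧
    (∀ k : ℕ, k ≤ n →
      0 < p * u (k - 1) + (1 - p) * u k → 0 < p * u k + (1 - p) * u (k + 1) →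
      r k ≤ r (k + 1)) := by
  have h01 : r 0 ≤ r 1 := by
    rw [hr0, hrs 0]
    apply div_nonneg
    · exact mul_nonneg hp0.le (hu0 0)
    · exact add_nonneg (mul_nonneg hp0.le (hu0 0))
        (mul_nonneg (by linarith) (hu0 1))
  refine ⟨h01, ?_⟩
  intro k hk hD1 hD2
  match k with
  | 0 => rw [hr0] at *; exact h01
  | m + 1 =>
    rw [hrs m, hrs (m + 1)]
    simp only [Nat.add_sub_cancel] at hD1
    rw [div_le_div_iff₀ hD1 hD2]
    have hlc := hulc (m + 1) (by omega)
    simp only [Nat.add_sub_cancel] at hlc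
    nlinarith [mul_le_mul_of_nonneg_left hlc
      (mul_pos hp0 (by linarith : (0:ℝ) < 1 - p)).le]
end

section
/- Let $B_1,\dots,B_n$ be independent Bernoulli random variables with parameters $p_i \in (0,1)$. For each $k$ let $\mathcal{S}_k \subset \{0,1\}^n$ be the set of 0-1 vectors with exactly $k$ ones, and let $p^k$ be the law of $(B_1,\dots,B_n)$ conditioned on $\sum_i B_i = k$. Write $b \prec b'$ for $b \in \mathcal{S}_k$, $b' \in \mathcal{S}_{k+1}$ if $b'$ is obtained from $b$ by changing exactly one 0 to a 1. Then for every $C \subseteq \mathcal{S}_k$, $\sum_{b \in C} p^k(b) \le \sum_{b' \in N(C)} p^{k+1}(b')$, where $N(C) = \{b' \in \mathcal{S}_{k+1} : b \prec b' \text{ for some } b \in C\}$. -/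
open Finset

private def sOnes {n : ℕ} (b : Fin n → Bool) : Finset (Fin n) :=
  Finset.univ.filter (fun i => b i = true)

private lemma mem_sOnes {n : ℕ} {b : Fin n → Bool} {j : Fin n} :
    j ∈ sOnes b ↔ b j = true := by simp [sOnes]

private lemma sOnes_update_true {n : ℕ} {b : Fin n → Bool} {i : Fin n} :
    sOnes (Function.update b i true) = insert i (sOnes b) := by
  ext j; by_cases h : j = i <;> simp [sOnes, Function.update_apply, h]

private lemma sOnes_update_false {n : ℕ} {c : Fin n → Bool} {i : Fin n} :
    sOnes (Function.update c i false) = (sOnes c).erase i := by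
  ext j; by_cases h : j = i <;> simp [sOnes, Function.update_apply, h]

private lemma update_false_eq {n : ℕ} {b : Fin n → Bool} {i : Fin n} (hb : b i = false) :
    Function.update b i false = b := by
  funext j; by_cases h : j = i <;> simp [Function.update_apply, h, hb]

private lemma update_true_eq {n : ℕ} {c : Fin n → Bool} {i : Fin n} (hc : c i = true) :
    Function.update c i true = c := by
  funext j; by_cases h : j = i <;> simp [Function.update_apply, h, hc]

private lemma sdiff_update {n : ℕ} {b c : Fin n → Bool} {i : Fin n} :
    sOnes (Function.update c i false) \ sOnes (Function.update b i true)
      = (sOnes c \ sOnes b).erase i := by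
  rw [sOnes_update_false, sOnes_update_true]
  ext j
  by_cases h : j = i <;> simp [h]

/-- Strassen's condition holds for the conditional laws of independent
Bernoulli random variables given their sum: for any set `C` of 0-1 vectors
with exactly `k` ones, the conditional probability of `C` given sum `k` is at
most the conditional probability, given sum `k+1`, of the set `N(C)` of
vectors obtained from an element of `C` by changing exactly one 0 to a 1. -/
theorem strassen_condition_bernoulli (n : ℕ) (p : Fin n → ℝ)
    (hp0 : ∀ i, 0 < p i) (hp1 : ∀ i, p i < 1)
    (W : (Fin n → Bool) → ℝ)
    (hW : ∀ b, W b = ∏ i : Fin n, (if b i then p i else 1 - p i))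
    (Z : ℕ → ℝ)
    (hZ : ∀ l, Z l = ∑ b ∈ Finset.univ.filter
      (fun b : Fin n → Bool => (Finset.univ.filter (fun i => b i = true)).card = l), W b)
    (k : ℕ) (hk : k < n)
    (C : Finset (Fin n → Bool))
    (hC : ∀ b ∈ C, (Finset.univ.filter (fun i => b i = true)).card = k) :
    (∑ b ∈ C, W b) / Z k ≤
      (∑ b' ∈ Finset.univ.filter
        (fun b' : Fin n → Bool =>
          (Finset.univ.filter (fun i => b' i = true)).card = k + 1 ∧
          ∃ b ∈ C, ∀ i, b i = true → b' i = true),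
        W b') / Z (k + 1) := by
  have hq : ∀ i, (0:ℝ) < 1 - p i := fun i => by linarith [hp1 i]
  have hWpos : ∀ b, 0 < W b := by
    intro b
    rw [hW b]
    refine Finset.prod_pos fun i _ => ?_
    cases hbi : b i <;> simp [hbi]
    · linarith [hp1 i]
    · exact hp0 i
  -- positivity of Z
  have hSne : ∀ l : ℕ, l ≤ n → (Finset.univ.filter
      (fun b : Fin n → Bool =>
        (Finset.univ.filter (fun i => b i = true)).card = l)).Nonempty := by
    intro l hl
    obtain ⟨s, -, hs⟩ := Finset.exists_subset_card_eq
      (show l ≤ (Finset.univ : Finset (Fin n)).card by simpa using hl)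
    refine ⟨fun i => decide (i ∈ s), ?_⟩
    simp only [mem_filter, mem_univ, true_and]
    rw [← hs]
    congr 1
    ext i
    simp
  have hZpos : ∀ l : ℕ, l ≤ n → 0 < Z l := by
    intro l hl
    rw [hZ]
    exact Finset.sum_pos (fun b _ => hWpos b) (hSne l hl)
  -- the weight-swap identity
  have hkey : ∀ (b c : Fin n → Bool) (i : Fin n), b i = false → c i = true →
      W (Function.update b i true) * W (Function.update c i false) = W b * W c := by
    intro b c i hb hc
    have split : ∀ b0 : Fin n → Bool, W b0 = (if b0 i then p i else 1 - p i) *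
        ∏ j ∈ Finset.univ.erase i, (if b0 j then p j else 1 - p j) := by
      intro b0
      rw [hW b0, ← Finset.mul_prod_erase Finset.univ _ (Finset.mem_univ i)]
    have hprod : ∀ (b0 : Fin n → Bool) (v : Bool),
        ∏ j ∈ Finset.univ.erase i, (if Function.update b0 i v j then p j else 1 - p j)
          = ∏ j ∈ Finset.univ.erase i, (if b0 j then p j else 1 - p j) :=
      fun b0 v => Finset.prod_congr rfl fun j hj => by
        rw [Function.update_of_ne (Finset.mem_erase.1 hj).1]
    rw [split (Function.update b i true), split (Function.update c i false), split b, split c,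
      hprod, hprod]
    simp only [Function.update_self, hb, hc]
    norm_num
    ring
  set Sk1 := Finset.univ.filter
      (fun b : Fin n → Bool =>
        (Finset.univ.filter (fun i => b i = true)).card = k + 1) with hSk1
  set Sk := Finset.univ.filter
      (fun b : Fin n → Bool =>
        (Finset.univ.filter (fun i => b i = true)).card = k) with hSk
  set N := Finset.univ.filter
      (fun b' : Fin n → Bool =>
        (Finset.univ.filter (fun i => b' i = true)).card = k + 1 ∧
        ∃ b ∈ C, ∀ i, b i = true → b' i = true) with hNdef
  rw [div_le_div_iff₀ (hZpos k hk.le) (hZpos (k+1) hk), hZ (k+1), hZ k]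
  rw [← hSk1, ← hSk, Finset.sum_mul_sum, Finset.sum_mul_sum]
  -- membership facts
  have hmemSk1 : ∀ {c : Fin n → Bool}, c ∈ Sk1 ↔ (sOnes c).card = k + 1 := by
    intro c; rw [hSk1]; simp [sOnes]
  have hmemSk : ∀ {c : Fin n → Bool}, c ∈ Sk ↔ (sOnes c).card = k := by
    intro c; rw [hSk]; simp [sOnes]
  have hCcard : ∀ b ∈ C, (sOnes b).card = k := hC
  have hone : ∀ b ∈ C, ∀ c ∈ Sk1, 1 ≤ (sOnes c \ sOnes b).card := by
    intro b hb c hc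
    have h1 := Finset.card_le_card_sdiff_add_card (s := sOnes c) (t := sOnes b)
    rw [hCcard b hb, hmemSk1.mp hc] at h1
    omega
  calc ∑ b ∈ C, ∑ c ∈ Sk1, W b * W c
      = ∑ b ∈ C, ∑ c ∈ Sk1, ∑ i ∈ sOnes c \ sOnes b,
          W b * W c / ((sOnes c \ sOnes b).card : ℝ) := by
        refine Finset.sum_congr rfl fun b hb => Finset.sum_congr rfl fun c hc => ?_
        have hcard0 : ((sOnes c \ sOnes b).card : ℝ) ≠ 0 := by
          have := hone b hb c hc
          positivity
        rw [Finset.sum_const, nsmul_eq_mul]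
        field_simp
    _ = ∑ x ∈ (C.sigma fun b => Sk1.sigma fun c => sOnes c \ sOnes b),
          W x.1 * W x.2.1 / ((sOnes x.2.1 \ sOnes x.1).card : ℝ) := by
        rw [Finset.sum_sigma]
        exact Finset.sum_congr rfl fun b _ => by rw [Finset.sum_sigma]
    _ = ∑ x ∈ (N.sigma fun b' => Sk.sigma fun c' =>
            (sOnes b' \ sOnes c').filter fun i => Function.update b' i false ∈ C),
          W x.1 * W x.2.1 / (((sOnes x.2.1 \ sOnes x.1).card : ℝ) + 1) := by
        refine Finset.sum_bij'
          (fun x _ => ⟨Function.update x.1 x.2.2 true,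
            Function.update x.2.1 x.2.2 false, x.2.2⟩)
          (fun x _ => ⟨Function.update x.1 x.2.2 false,
            Function.update x.2.1 x.2.2 true, x.2.2⟩)
          ?_ ?_ ?_ ?_ ?_
        · -- maps into T2
          rintro ⟨b, c, i⟩ hx
          simp only [Finset.mem_sigma, Finset.mem_sdiff, mem_sOnes] at hx
          obtain ⟨hbC, hcS, hci, hbi⟩ := hx
          have hbi' : b i = false := by simpa using hbi
          simp only [Finset.mem_sigma, Finset.mem_filter, Finset.mem_sdiff, mem_sOnes]
          refine ⟨?_, ?_, ⟨?_, ?_⟩, ?_⟩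
          · -- update b i true ∈ N
            rw [hNdef]
            simp only [Finset.mem_filter, Finset.mem_univ, true_and]
            constructor
            · have : (sOnes (Function.update b i true)).card = k + 1 := by
                rw [sOnes_update_true, Finset.card_insert_of_notMem
                  (by simp [mem_sOnes, hbi'])]
                rw [hCcard b hbC]
              simpa [sOnes] using this
            · exact ⟨b, hbC, fun j hj => by
                by_cases h : j = i <;> simp [Function.update_apply, h, hj]⟩
          · -- update c i false ∈ Sk
            rw [hmemSk, sOnes_update_false, Finset.card_erase_of_mem (mem_sOnes.mpr hci),
              hmemSk1.mp hcS]
            omega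
          · simp [Function.update_self]
          · simp [Function.update_self]
          · rw [Function.update_idem, update_false_eq hbi']
            exact hbC
        · -- maps back into T1
          rintro ⟨b', c', i⟩ hx
          simp only [Finset.mem_sigma, Finset.mem_filter, Finset.mem_sdiff, mem_sOnes] at hx
          obtain ⟨hb'N, hc'S, ⟨hb'i, hc'i⟩, hupC⟩ := hx
          have hc'i' : c' i = false := by simpa using hc'i
          simp only [Finset.mem_sigma, Finset.mem_sdiff, mem_sOnes]
          refine ⟨hupC, ?_, ?_, ?_⟩
          · rw [hmemSk1, sOnes_update_true, Finset.card_insert_of_notMem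
              (by simp [mem_sOnes, hc'i']), hmemSk.mp hc'S]
          · simp [Function.update_self]
          · simp [Function.update_self]
        · -- left inverse
          rintro ⟨b, c, i⟩ hx
          simp only [Finset.mem_sigma, Finset.mem_sdiff, mem_sOnes] at hx
          obtain ⟨hbC, hcS, hci, hbi⟩ := hx
          have hbi' : b i = false := by simpa using hbi
          simp only [Function.update_idem, update_false_eq hbi', update_true_eq hci]
        · -- right inverse
          rintro ⟨b', c', i⟩ hx
          simp only [Finset.mem_sigma, Finset.mem_filter, Finset.mem_sdiff, mem_sOnes] at hx
          obtain ⟨hb'N, hc'S, ⟨hb'i, hc'i⟩, hupC⟩ := hx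
          have hc'i' : c' i = false := by simpa using hc'i
          simp only [Function.update_idem, update_false_eq hc'i', update_true_eq hb'i]
        · -- term equality
          rintro ⟨b, c, i⟩ hx
          simp only [Finset.mem_sigma, Finset.mem_sdiff, mem_sOnes] at hx
          obtain ⟨hbC, hcS, hci, hbi⟩ := hx
          have hbi' : b i = false := by simpa using hbi
          have hmemd : i ∈ sOnes c \ sOnes b := by
            simp [Finset.mem_sdiff, mem_sOnes, hci, hbi']
          have hcard : ((sOnes (Function.update c i false) \
              sOnes (Function.update b i true)).card : ℝ) + 1
              = ((sOnes c \ sOnes b).card : ℝ) := by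
            rw [sdiff_update, Finset.card_erase_of_mem hmemd]
            have h1 : 1 ≤ (sOnes c \ sOnes b).card := Finset.card_pos.mpr ⟨i, hmemd⟩
            have h2 : (sOnes c \ sOnes b).card - 1 + 1 = (sOnes c \ sOnes b).card := by omega
            exact_mod_cast h2
          simp only
          rw [hcard, hkey b c i hbi' hci]
    _ = ∑ b' ∈ N, ∑ c' ∈ Sk, ∑ i ∈ (sOnes b' \ sOnes c').filter
            (fun i => Function.update b' i false ∈ C),
          W b' * W c' / (((sOnes c' \ sOnes b').card : ℝ) + 1) := by
        rw [Finset.sum_sigma]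
        exact Finset.sum_congr rfl fun b _ => by rw [Finset.sum_sigma]
    _ ≤ ∑ b' ∈ N, ∑ c' ∈ Sk, W b' * W c' := by
        refine Finset.sum_le_sum fun b' hb' => Finset.sum_le_sum fun c' hc' => ?_
        have hb'card : (sOnes b').card = k + 1 := by
          rw [hNdef] at hb'
          simp only [Finset.mem_filter] at hb'
          simpa [sOnes] using hb'.2.1
        have hc'card : (sOnes c').card = k := hmemSk.mp hc'
        have hdcard : (sOnes b' \ sOnes c').card = (sOnes c' \ sOnes b').card + 1 := by
          have h1 := Finset.card_sdiff_add_card_inter (sOnes b') (sOnes c')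
          have h2 := Finset.card_sdiff_add_card_inter (sOnes c') (sOnes b')
          rw [Finset.inter_comm] at h2
          omega
        have hA : (0:ℝ) ≤ W b' * W c' := le_of_lt (mul_pos (hWpos b') (hWpos c'))
        rw [Finset.sum_const, nsmul_eq_mul]
        set m : ℕ := (sOnes c' \ sOnes b').card with hm
        have hle : (((sOnes b' \ sOnes c').filter
            (fun i => Function.update b' i false ∈ C)).card : ℝ) ≤ (m : ℝ) + 1 := by
          have := Finset.card_filter_le (sOnes b' \ sOnes c')
            (fun i => Function.update b' i false ∈ C)
          have : ((sOnes b' \ sOnes c').filter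
              (fun i => Function.update b' i false ∈ C)).card ≤ m + 1 := by omega
          exact_mod_cast this
        calc (((sOnes b' \ sOnes c').filter
              (fun i => Function.update b' i false ∈ C)).card : ℝ)
              * (W b' * W c' / ((m : ℝ) + 1))
            ≤ ((m : ℝ) + 1) * (W b' * W c' / ((m : ℝ) + 1)) := by
              apply mul_le_mul_of_nonneg_right hle
              positivity
          _ = W b' * W c' := by
              field_simp
end
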